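/- arXiv:2311.16064 — 7 statements merged into one kernel-verified Lean document; each statement's English description precedes it below -/
import Mathlib

section
/- Let D = (a,b) with a < b and let (X_t)_{t∈(0,1]} be real random variables on a probability space such that for each t ∈ (0,1] the law of X_t is the centered Gaussian distribution N(0, R_t) with R_t > 0. Then for every t ∈ (0,1], (b−a) − H_D(t) = √(2R_t/π) − Err(t), where Err(t) := 2∫_{b−a}^∞ ℙ(X_t > u) du satisfies 0 < Err(t) ≤ (2 R_t^{3/2} / ((b−a)² √(2π))) · exp(−(b−a)²/(2R_t)). -/
open MeasureTheory ProbabilityTheory Filter Set Real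
open scoped NNReal

namespace HCAux

noncomputable def g (v : ℝ≥0) : ℝ → ℝ := gaussianPDFReal 0 v

noncomputable def T (v : ℝ≥0) (u : ℝ) : ℝ := ∫ y in Ioi u, g v y

variable {v : ℝ≥0}

lemma g_apply (y : ℝ) : g v y = (Real.sqrt (2 * π * v))⁻¹ * rexp (-y ^ 2 / (2 * v)) := by
  simp only [g, gaussianPDFReal, sub_zero]

lemma g_nonneg (y : ℝ) : 0 ≤ g v y := gaussianPDFReal_nonneg 0 v y

lemma g_pos (hv : v ≠ 0) (y : ℝ) : 0 < g v y := gaussianPDFReal_pos 0 v y hv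

lemma g_cont : Continuous (g v) := by
  simp only [funext g_apply]
  fun_prop

lemma g_neg (y : ℝ) : g v (-y) = g v y := by simp [g_apply]

lemma g_integrable : Integrable (g v) := integrable_gaussianPDFReal 0 v

lemma g_eq (hv : v ≠ 0) (y : ℝ) :
    g v y = (Real.sqrt (2 * π * v))⁻¹ * rexp (-((2 * (v : ℝ))⁻¹ * y ^ 2)) := by
  rw [g_apply]
  congr 1
  rw [neg_div, ← inv_mul_eq_div]

lemma mul_g_integrable (hv : v ≠ 0) : Integrable (fun y => y * g v y) := by
  have hb : (0:ℝ) < (2 * (v : ℝ))⁻¹ := by positivity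
  have h := (integrable_mul_exp_neg_mul_sq hb).const_mul (Real.sqrt (2 * π * v))⁻¹
  refine h.congr (ae_of_all _ fun y => ?_)
  simp only [g_eq hv, neg_mul]
  ring

lemma hasDerivAt_g (hv : v ≠ 0) (u : ℝ) :
    HasDerivAt (g v) (-(u / v) * g v u) u := by
  have hvpos : (0:ℝ) < (v : ℝ) := by positivity
  have h1 : HasDerivAt (fun y : ℝ => -y ^ 2 / (2 * v)) (-(2 * u) / (2 * v)) u := by
    simpa using ((hasDerivAt_pow 2 u).neg.div_const (2 * (v:ℝ)))
  have h2 := (h1.exp.const_mul (Real.sqrt (2 * π * v))⁻¹)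
  have : (fun y : ℝ => (Real.sqrt (2 * π * v))⁻¹ * rexp (-y ^ 2 / (2 * v))) = g v := by
    ext y; rw [g_apply]
  rw [this] at h2
  refine h2.congr_deriv ?_
  rw [g_apply]
  field_simp

lemma tendsto_g_atTop : Tendsto (g v) atTop (nhds 0) := by
  by_cases hv : v = 0
  · simp only [hv, g, gaussianPDFReal_zero_var]
    exact tendsto_const_nhds
  have hvpos : (0:ℝ) < (v : ℝ) := by positivity
  have h1 : Tendsto (fun y : ℝ => -y ^ 2 / (2 * v)) atTop atBot := by
    apply Tendsto.atBot_div_const (by positivity)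
    simpa using tendsto_neg_atBot_iff.2 (tendsto_pow_atTop (α := ℝ) two_ne_zero)
  have h2 : Tendsto (fun y : ℝ => rexp (-y ^ 2 / (2 * v))) atTop (nhds 0) :=
    Real.tendsto_exp_atBot.comp h1
  have := h2.const_mul (Real.sqrt (2 * π * v))⁻¹
  rw [mul_zero] at this
  refine this.congr fun y => (g_apply y).symm

lemma integral_Ioi_mul_g (hv : v ≠ 0) (u : ℝ) :
    ∫ y in Ioi u, y * g v y = (v : ℝ) * g v u := by
  have hvpos : (0:ℝ) < (v : ℝ) := by positivity
  have h := integral_Ioi_of_hasDerivAt_of_tendsto (f := fun y => -(v : ℝ) * g v y)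
    (f' := fun y => y * g v y) (a := u) (m := 0)
    ((continuous_const.mul g_cont).continuousWithinAt)
    (fun x _ => by
      have := (hasDerivAt_g hv x).const_mul (-(v:ℝ))
      refine this.congr_deriv ?_
      field_simp)
    (mul_g_integrable hv).integrableOn
    (by simpa using tendsto_g_atTop.const_mul (-(v:ℝ)))
  rw [h]; ring

lemma T_nonneg (u : ℝ) : 0 ≤ T v u := setIntegral_nonneg measurableSet_Ioi fun y _ => g_nonneg y

lemma integral_g_univ (hv : v ≠ 0) : ∫ y, g v y = 1 := integral_gaussianPDFReal_eq_one 0 hv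

lemma T_le_one (u : ℝ) : T v u ≤ 1 := by
  by_cases hv : v = 0
  · simp [T, hv, g, gaussianPDFReal_zero_var]
  · rw [← integral_g_univ hv]
    exact setIntegral_le_integral g_integrable (ae_of_all _ g_nonneg)

lemma T_antitone : Antitone (T v) := fun u u' h =>
  setIntegral_mono_set g_integrable.integrableOn (ae_of_all _ fun y => g_nonneg y)
    (HasSubset.Subset.eventuallyLE (Ioi_subset_Ioi h))

lemma Iic_integral (u : ℝ) : (∫ y in Iic u, g v y) + T v u = ∫ y, g v y := by
  rw [T, ← setIntegral_union (Iic_disjoint_Ioi le_rfl) measurableSet_Ioi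
    g_integrable.integrableOn g_integrable.integrableOn, Iic_union_Ioi,
    setIntegral_univ]

lemma T_eq (u : ℝ) : T v u = T v 0 - ∫ x in (0:ℝ)..u, g v x := by
  have h := intervalIntegral.integral_Iic_sub_Iic (μ := volume) (f := g v)
    g_integrable.integrableOn g_integrable.integrableOn (a := (0:ℝ)) (b := u)
  have h0 := Iic_integral (v := v) 0
  have hu := Iic_integral (v := v) u
  linarith

lemma hasDerivAt_T (u : ℝ) : HasDerivAt (T v) (-(g v u)) u := by
  have hTfun : T v = fun u => T v 0 - ∫ x in (0:ℝ)..u, g v x := funext T_eq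
  rw [hTfun]
  have h : HasDerivAt (fun u => ∫ x in (0:ℝ)..u, g v x) (g v u) u :=
    intervalIntegral.integral_hasDerivAt_right (g_cont.intervalIntegrable _ _)
      (g_cont.stronglyMeasurable.stronglyMeasurableAtFilter) g_cont.continuousAt
  simpa using h.const_sub (T v 0)

lemma T_cont : Continuous (T v) :=
  continuous_iff_continuousAt.2 fun u => (hasDerivAt_T u).continuousAt

lemma mul_T_le (hv : v ≠ 0) {u : ℝ} (hu : 0 < u) : u * T v u ≤ (v : ℝ) * g v u := by
  have h1 : u * T v u = ∫ y in Ioi u, u * g v y := (integral_const_mul u _).symm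
  rw [h1, ← integral_Ioi_mul_g hv u]
  refine setIntegral_mono_on (g_integrable.integrableOn.const_mul u)
    (mul_g_integrable hv).integrableOn measurableSet_Ioi fun y hy => ?_
  exact mul_le_mul_of_nonneg_right (le_of_lt hy) (g_nonneg y)

lemma T_le_div (hv : v ≠ 0) {u : ℝ} (hu : 0 < u) : T v u ≤ (v : ℝ) * g v u / u :=
  (le_div_iff₀ hu).2 (by rw [mul_comm]; exact mul_T_le hv hu)

lemma T_integrableOn_Ioi (hv : v ≠ 0) (c : ℝ) : IntegrableOn (T v) (Ioi c) := by
  have hM : c ≤ max c 1 := le_max_left _ _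
  have h1 : IntegrableOn (T v) (Ioc c (max c 1)) :=
    (T_cont.integrableOn_Icc).mono_set Ioc_subset_Icc_self
  have h2 : IntegrableOn (T v) (Ioi (max c 1)) := by
    refine Integrable.mono' ((mul_g_integrable hv).const_mul (v : ℝ)).integrableOn
      T_cont.aestronglyMeasurable.restrict ?_
    refine (ae_restrict_iff' measurableSet_Ioi).2 (ae_of_all _ fun u hu => ?_)
    have hu1 : (1:ℝ) ≤ u := le_of_lt (lt_of_le_of_lt (le_max_right c 1) hu)
    have hu0 : (0:ℝ) < u := lt_of_lt_of_le one_pos hu1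
    rw [Real.norm_eq_abs, abs_of_nonneg (T_nonneg u)]
    calc T v u ≤ (v : ℝ) * g v u / u := T_le_div hv hu0
    _ ≤ (v : ℝ) * (u * g v u) := by
        rw [div_le_iff₀ hu0]
        have h0 : (0:ℝ) ≤ (v:ℝ) * g v u := mul_nonneg (by positivity) (g_nonneg u)
        have h4 : (1:ℝ) ≤ u * u := by nlinarith
        nlinarith
  rw [← Ioc_union_Ioi_eq_Ioi hM]
  exact h1.union h2

lemma integral_T_Ioi (hv : v ≠ 0) {c : ℝ} (hc : 0 ≤ c) :
    ∫ u in Ioi c, T v u = (v : ℝ) * g v c - c * T v c := by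
  have h := integral_Ioi_of_hasDerivAt_of_tendsto
    (f := fun u => u * T v u - (v : ℝ) * g v u) (f' := T v) (a := c) (m := 0)
    (((continuous_id.mul T_cont).sub (continuous_const.mul g_cont)).continuousWithinAt)
    (fun x _ => by
      have h1 := (hasDerivAt_id x).mul (hasDerivAt_T (v := v) x)
      have h2 := (hasDerivAt_g hv x).const_mul (v : ℝ)
      have h3 := h1.sub h2
      refine h3.congr_deriv ?_
      have hvpos : (0:ℝ) < (v:ℝ) := by positivity
      field_simp
      simp only [id_eq]
      ring)
    (T_integrableOn_Ioi hv c)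
    ?_
  · rw [h]; ring
  · have hg : Tendsto (fun u => (v:ℝ) * g v u) atTop (nhds 0) := by
      simpa using tendsto_g_atTop.const_mul (v:ℝ)
    have hmul : Tendsto (fun u => u * T v u) atTop (nhds 0) := by
      refine tendsto_of_tendsto_of_tendsto_of_le_of_le' tendsto_const_nhds hg
        ?_ ?_
      · filter_upwards [eventually_gt_atTop 0] with u hu
        exact mul_nonneg (le_of_lt hu) (T_nonneg u)
      · filter_upwards [eventually_gt_atTop 0] with u hu
        exact mul_T_le hv hu
    simpa using hmul.sub hg

lemma T_pos (hv : v ≠ 0) (u : ℝ) : 0 < T v u := by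
  refine (setIntegral_pos_iff_support_of_nonneg_ae
    (ae_of_all _ fun y => g_nonneg y) g_integrable.integrableOn).2 ?_
  have hsupp : Function.support (g v) = univ := by
    ext y; simp [Function.mem_support, (g_pos hv y).ne']
  rw [hsupp, univ_inter]
  simp [Measure.restrict_apply, measurableSet_Ioi]

lemma integral_Ioo_g (hv : v ≠ 0) {c d : ℝ} (hcd : c ≤ d) :
    ∫ y in Ioo c d, g v y = T v c - T v d := by
  have h : T v c = (∫ y in Ioc c d, g v y) + T v d := by
    rw [T, ← Ioc_union_Ioi_eq_Ioi hcd,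
      setIntegral_union (Ioc_disjoint_Ioi le_rfl) measurableSet_Ioi
        g_integrable.integrableOn g_integrable.integrableOn]
    rfl
  rw [← integral_Ioc_eq_integral_Ioo]
  linarith

lemma T_neg_eq (hv : v ≠ 0) (u : ℝ) : T v (-u) = 1 - T v u := by
  have h1 : ∫ y in Iic (-u), g v y = T v u := by
    rw [← integral_comp_neg_Ioi u (g v)]
    simp only [g_neg]
    rfl
  have h2 := Iic_integral (v := v) (-u)
  rw [integral_g_univ hv] at h2
  linarith

lemma sqrt_identity (hv : v ≠ 0) : 2 * (v:ℝ) * g v 0 = Real.sqrt (2 * v / π) := by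
  have hvpos : (0:ℝ) < (v:ℝ) := by positivity
  rw [g_apply]
  simp only [ne_eq, OfNat.ofNat_ne_zero, not_false_eq_true, zero_pow, neg_zero, zero_div,
    Real.exp_zero, mul_one]
  have h1 : 2 * (v:ℝ) / π = (2 * (v:ℝ))^2 / (2 * π * v) := by
    field_simp [pi_ne_zero]
  rw [h1, Real.sqrt_div (by positivity : (0:ℝ) ≤ (2 * (v:ℝ))^2),
    Real.sqrt_sq (by positivity : (0:ℝ) ≤ 2 * (v:ℝ)), div_eq_mul_inv]

lemma integral_T_Ioo (hv : v ≠ 0) {L : ℝ} (hL : 0 < L) :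
    ∫ u in Ioo 0 L, T v u = (∫ u in Ioi 0, T v u) - ∫ u in Ioi L, T v u := by
  have h : ∫ u in Ioi 0, T v u = (∫ u in Ioc 0 L, T v u) + ∫ u in Ioi L, T v u := by
    rw [← Ioc_union_Ioi_eq_Ioi hL.le,
      setIntegral_union (Ioc_disjoint_Ioi le_rfl) measurableSet_Ioi
        ((T_integrableOn_Ioi hv 0).mono_set Ioc_subset_Ioi_self)
        (T_integrableOn_Ioi hv L)]
  rw [← integral_Ioc_eq_integral_Ioo]
  linarith

lemma integral_T_Ioi_pos (hv : v ≠ 0) (L : ℝ) : 0 < ∫ u in Ioi L, T v u := by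
  have h1 : T v (L + 1) * 1 ≤ ∫ u in Ioc L (L + 1), T v u := by
    have : T v (L + 1) * 1 = ∫ _u in Ioc L (L + 1), T v (L + 1) := by
      rw [setIntegral_const, Real.volume_real_Ioc]
      simp
    rw [this]
    refine setIntegral_mono_on (integrableOn_const ?_)
      ((T_integrableOn_Ioi hv L).mono_set Ioc_subset_Ioi_self)
      measurableSet_Ioc fun u hu => T_antitone hu.2
    rw [Real.volume_Ioc]; exact ENNReal.ofReal_ne_top
  have h2 : ∫ u in Ioc L (L + 1), T v u ≤ ∫ u in Ioi L, T v u :=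
    setIntegral_mono_set (T_integrableOn_Ioi hv L) (ae_of_all _ fun u => T_nonneg u)
      (HasSubset.Subset.eventuallyLE Ioc_subset_Ioi_self)
  have := T_pos hv (L + 1)
  nlinarith

lemma integral_T_Ioi_le (hv : v ≠ 0) {L : ℝ} (hL : 0 < L) :
    ∫ u in Ioi L, T v u ≤ (v:ℝ)^2 * g v L / L^2 := by
  have hvpos : (0:ℝ) < (v:ℝ) := by positivity
  have key : ∫ u in Ioi L, T v u ≤ ∫ u in Ioi L, (v:ℝ) / L^2 * (u * g v u) := by
    refine setIntegral_mono_on (T_integrableOn_Ioi hv L)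
      (((mul_g_integrable hv).const_mul _).integrableOn) measurableSet_Ioi fun u hu => ?_
    have hu' : L < u := hu
    have hu0 : 0 < u := hL.trans hu'
    refine (T_le_div hv hu0).trans ?_
    rw [div_le_iff₀ hu0, div_mul_eq_mul_div, div_mul_eq_mul_div, le_div_iff₀ (by positivity)]
    have hg := g_nonneg (v := v) u
    have h5 : L * L ≤ u * u := mul_le_mul hu'.le hu'.le hL.le hu0.le
    have h6 : (0:ℝ) ≤ (v:ℝ) * g v u := mul_nonneg hvpos.le hg
    nlinarith [mul_le_mul_of_nonneg_left h5 h6]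
  calc ∫ u in Ioi L, T v u ≤ ∫ u in Ioi L, (v:ℝ) / L^2 * (u * g v u) := key
  _ = (v:ℝ) / L^2 * ∫ u in Ioi L, u * g v u := integral_const_mul _ _
  _ = (v:ℝ)^2 * g v L / L^2 := by rw [integral_Ioi_mul_g hv]; ring

end HCAux


open HCAux in
/-- For a family `(X_t)` with `X_t ~ N(0, R_t)`, `R_t > 0`, and
`D = (a,b)`, the regular heat content satisfies
`(b-a) - H_D(t) = √(2 R_t / π) - Err(t)` where
`Err(t) = 2 ∫_{b-a}^∞ ℙ(X_t > u) du` satisfies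
`0 < Err(t) ≤ (2 R_t^{3/2} / ((b-a)² √(2π))) exp(-(b-a)²/(2R_t))`. -/
theorem regular_heat_content_gaussian_exact
    {Ω : Type*} [MeasureSpace Ω] [IsProbabilityMeasure (ℙ : Measure Ω)]
    (a b : ℝ) (hab : a < b) (X : ℝ → Ω → ℝ) (R : ℝ → NNReal)
    (hRpos : ∀ t ∈ Set.Ioc (0:ℝ) 1, 0 < R t)
    (hlaw : ∀ t ∈ Set.Ioc (0:ℝ) 1, Measure.map (X t) ℙ = gaussianReal 0 (R t))
    (H Err : ℝ → ℝ)
    (hH : ∀ t, H t = ∫ x in Set.Ioo a b, (ℙ {ω | X t ω + x ∈ Set.Ioo a b}).toReal)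
    (hErr : ∀ t, Err t = 2 * ∫ u in Set.Ioi (b - a), (ℙ {ω | u < X t ω}).toReal) :
    ∀ t ∈ Set.Ioc (0:ℝ) 1,
      (b - a) - H t = Real.sqrt (2 * (R t : ℝ) / Real.pi) - Err t ∧
      0 < Err t ∧
      Err t ≤ 2 * (R t : ℝ) ^ ((3:ℝ)/2) / ((b - a) ^ 2 * Real.sqrt (2 * Real.pi)) *
        Real.exp (-(b - a) ^ 2 / (2 * (R t : ℝ))) := by
  intro t ht
  set v : ℝ≥0 := R t with hv_def
  have hv : v ≠ 0 := (hRpos t ht).ne'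
  have hvpos : (0:ℝ) < (v:ℝ) := by exact_mod_cast hRpos t ht
  set L : ℝ := b - a with hL_def
  have hL : 0 < L := sub_pos.2 hab
  have hXm : AEMeasurable (X t) ℙ :=
    aemeasurable_of_map_neZero (by rw [hlaw t ht]; infer_instance)
  have hmap : ∀ (s : Set ℝ), MeasurableSet s → (ℙ (X t ⁻¹' s)).toReal = ∫ y in s, g v y := by
    intro s hs
    have hnn : 0 ≤ ∫ x in s, gaussianPDFReal 0 v x :=
      setIntegral_nonneg hs fun y _ => gaussianPDFReal_nonneg 0 v y
    rw [← Measure.map_apply_of_aemeasurable hXm hs, hlaw t ht,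
      gaussianReal_apply_eq_integral 0 hv s, ENNReal.toReal_ofReal hnn]
    rfl
  have hP2 : ∀ u : ℝ, (ℙ {ω | u < X t ω}).toReal = T v u := by
    intro u
    have hset : {ω | u < X t ω} = X t ⁻¹' (Ioi u) := rfl
    rw [hset, hmap _ measurableSet_Ioi]
    rfl
  have hP1 : ∀ x : ℝ, (ℙ {ω | X t ω + x ∈ Ioo a b}).toReal = T v (a - x) - T v (b - x) := by
    intro x
    have hset : {ω | X t ω + x ∈ Ioo a b} = X t ⁻¹' (Ioo (a - x) (b - x)) := by
      ext ω
      simp only [mem_setOf_eq, mem_preimage, mem_Ioo]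
      constructor <;> (rintro ⟨h1, h2⟩; constructor <;> linarith)
    rw [hset, hmap _ measurableSet_Ioo, integral_Ioo_g hv (by linarith : a - x ≤ b - x)]
  have hErrt : Err t = 2 * ∫ u in Ioi L, T v u := by
    rw [hErr t]
    congr 1
    exact setIntegral_congr_fun measurableSet_Ioi fun u _ => hP2 u
  have hHt : H t = L - 2 * ∫ u in Ioo 0 L, T v u := by
    rw [hH t]
    have c1 : (∫ x in Ioo a b, (ℙ {ω | X t ω + x ∈ Ioo a b}).toReal)
        = ∫ x in a..b, (T v (a - x) - T v (b - x)) := by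
      rw [intervalIntegral.integral_of_le hab.le, integral_Ioc_eq_integral_Ioo]
      exact setIntegral_congr_fun measurableSet_Ioo fun x _ => hP1 x
    have c2 : (∫ x in a..b, (T v (a - x) - T v (b - x)))
        = (∫ x in a..b, T v (a - x)) - ∫ x in a..b, T v (b - x) := by
      have : Continuous (T v) := T_cont
      apply intervalIntegral.integral_sub <;>
        exact Continuous.intervalIntegrable (by fun_prop) _ _
    have c3 : (∫ x in a..b, T v (a - x)) = ∫ x in (a - b)..(0:ℝ), T v x := by
      rw [intervalIntegral.integral_comp_sub_left (T v) a, sub_self]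
    have c4 : (∫ x in a..b, T v (b - x)) = ∫ x in (0:ℝ)..L, T v x := by
      rw [intervalIntegral.integral_comp_sub_left (T v) b, sub_self]
    have c5 : (∫ x in (a - b)..(0:ℝ), T v x) = ∫ x in (0:ℝ)..L, T v (-x) := by
      rw [intervalIntegral.integral_comp_neg (fun x => T v x)]
      norm_num [hL_def, neg_sub]
    have c6 : (∫ x in (0:ℝ)..L, T v (-x)) = ∫ x in (0:ℝ)..L, (1 - T v x) :=
      intervalIntegral.integral_congr fun x _ => T_neg_eq hv x
    have c7 : (∫ x in (0:ℝ)..L, (1 - T v x))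
        = L - ∫ x in (0:ℝ)..L, T v x := by
      rw [intervalIntegral.integral_sub intervalIntegrable_const
        (T_cont.intervalIntegrable _ _)]
      simp
    have c8 : (∫ x in (0:ℝ)..L, T v x) = ∫ u in Ioo 0 L, T v u := by
      rw [intervalIntegral.integral_of_le hL.le, integral_Ioc_eq_integral_Ioo]
    rw [c1, c2, c3, c4, c5, c6, c7, c8]
    ring
  have hIoo := integral_T_Ioo hv hL
  have hIoi0 : (∫ u in Ioi (0:ℝ), T v u) = (v:ℝ) * g v 0 := by
    rw [integral_T_Ioi hv le_rfl]
    ring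
  refine ⟨?_, ?_, ?_⟩
  · rw [hHt, hErrt, ← sqrt_identity hv]
    linarith
  · rw [hErrt]
    linarith [integral_T_Ioi_pos hv L]
  · rw [hErrt]
    have hle := integral_T_Ioi_le hv hL
    have heq : 2 * ((v:ℝ)^2 * g v L / L^2)
        = 2 * (v:ℝ) ^ ((3:ℝ)/2) / (L ^ 2 * Real.sqrt (2 * π)) *
          Real.exp (-L ^ 2 / (2 * (v:ℝ))) := by
      have h32 : (v:ℝ) ^ ((3:ℝ)/2) = (v:ℝ) * Real.sqrt v := by
        rw [show (3:ℝ)/2 = 1 + 1/2 by norm_num, Real.rpow_add hvpos, Real.rpow_one,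
          ← Real.sqrt_eq_rpow]
      have hsplit : Real.sqrt (2*π*(v:ℝ)) = Real.sqrt (2*π) * Real.sqrt v :=
        Real.sqrt_mul (by positivity) _
      have hvsq : (v:ℝ)^2 = (v:ℝ) * Real.sqrt v * Real.sqrt v := by
        rw [mul_assoc, Real.mul_self_sqrt hvpos.le]
        ring
      rw [g_apply, h32, hsplit, hvsq]
      have hsv : Real.sqrt (v:ℝ) ≠ 0 := by positivity
      have h2π : Real.sqrt (2*π) ≠ 0 := by positivity
      field_simp
    linarith
end

section
/- Let D = (a,b) with a < b and let (X_t)_{t∈(0,1]} be real random variables such that for each t ∈ (0,1] the law of X_t is the centered Gaussian distribution N(0, R_t) with R_t > 0, and assume R_t → 0 as t ↓ 0. Then lim_{t↓0} ((b−a) − H_D(t)) / √(R_t) = √(2/π). -/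
open MeasureTheory ProbabilityTheory Filter Set

lemma rhc_pdf_eq (y : ℝ) : gaussianPDFReal 0 1 y
    = (Real.sqrt (2 * Real.pi))⁻¹ * Real.exp (-(y^2)/2) := by
  simp [gaussianPDFReal]

lemma rhc_K : ∫ y in Ioi (0:ℝ), y * Real.exp (-(y^2)/2) = 1 := by
  have h := integral_Ioi_of_hasDerivAt_of_nonneg
    (g := fun y : ℝ => -Real.exp (-(y^2)/2))
    (g' := fun y => y * Real.exp (-(y^2)/2)) (a := 0) (l := 0)
    (Continuous.continuousWithinAt (by continuity)) ?_ ?_ ?_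
  · simpa using h
  · intro x _
    have h1 : HasDerivAt (fun y : ℝ => -(y^2)/2) (-x) x := by
      have := (((hasDerivAt_pow 2 x)).neg).div_const 2
      refine this.congr_deriv ?_
      norm_num; ring
    have h2 := (h1.exp).neg
    refine h2.congr_deriv ?_
    ring
  · intro x hx
    have : (0:ℝ) < x := hx
    positivity
  · have h3 : Tendsto (fun y : ℝ => -(y^2)/2) atTop atBot := by
      have h4 : Tendsto (fun y : ℝ => y^2) atTop atTop := tendsto_pow_atTop (by norm_num)
      have h5 := tendsto_neg_atTop_atBot.comp h4
      have := h5.atBot_div_const (by norm_num : (0:ℝ) < 2)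
      simpa [Function.comp, neg_div] using this
    have := (Real.tendsto_exp_atBot.comp h3).neg
    simpa using this


lemma rhc_J_integrable : IntegrableOn (fun y => y * gaussianPDFReal 0 1 y) (Ioi (0:ℝ)) := by
  have h : Integrable (fun y : ℝ => y * Real.exp (-(1/2) * y^2)) :=
    integrable_mul_exp_neg_mul_sq (by norm_num)
  have h2 := (h.const_mul ((Real.sqrt (2 * Real.pi))⁻¹)).integrableOn (s := Ioi 0)
  apply h2.congr_fun ?_ measurableSet_Ioi
  intro y _
  simp only [rhc_pdf_eq]
  ring

lemma rhc_J : ∫ y in Ioi (0:ℝ), y * gaussianPDFReal 0 1 y = (Real.sqrt (2 * Real.pi))⁻¹ := by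
  have : ∀ y : ℝ, y * gaussianPDFReal 0 1 y
      = (Real.sqrt (2 * Real.pi))⁻¹ * (y * Real.exp (-(y^2)/2)) := by
    intro y; rw [rhc_pdf_eq]; ring
  simp_rw [this]
  rw [integral_const_mul, rhc_K, mul_one]

lemma rhc_lintegral_tail :
    ∫⁻ v in Ioi (0:ℝ), gaussianReal 0 1 (Ici v)
      = ENNReal.ofReal ((Real.sqrt (2 * Real.pi))⁻¹) := by
  have hpdfm : Measurable (gaussianPDF 0 1) := measurable_gaussianPDF 0 1
  have step1 : ∀ v : ℝ, gaussianReal 0 1 (Ici v)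
      = ∫⁻ y, (Ici v).indicator (gaussianPDF 0 1) y := by
    intro v
    rw [gaussianReal_apply 0 one_ne_zero, lintegral_indicator measurableSet_Ici _]
  simp_rw [step1]
  rw [lintegral_lintegral_swap]
  · have inner : ∀ y : ℝ, (∫⁻ v in Ioi (0:ℝ), (Ici v).indicator (gaussianPDF 0 1) y)
        = gaussianPDF 0 1 y * ENNReal.ofReal y := by
      intro y
      have hfun : (fun v : ℝ => (Ici v).indicator (gaussianPDF 0 1) y)
          = (Iic y).indicator (fun _ => gaussianPDF 0 1 y) := by
        ext v
        by_cases hvy : v ≤ y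
        · simp [Set.indicator_apply, hvy]
        · simp [Set.indicator_apply, hvy]
      rw [hfun, lintegral_indicator measurableSet_Iic _, setLIntegral_const,
        Measure.restrict_apply measurableSet_Iic]
      have : Iic y ∩ Ioi 0 = Ioc 0 y := by rw [inter_comm, Set.Ioi_inter_Iic]
      rw [this, Real.volume_Ioc]
      simp
    simp_rw [inner]
    have hF : (fun y => gaussianPDF 0 1 y * ENNReal.ofReal y)
        = (Ioi (0:ℝ)).indicator (fun y => ENNReal.ofReal (y * gaussianPDFReal 0 1 y)) := by
      ext y
      by_cases hy : 0 < y
      · simp only [Set.indicator_apply, mem_Ioi, hy, if_true, gaussianPDF]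
        rw [← ENNReal.ofReal_mul (gaussianPDFReal_nonneg 0 1 y), mul_comm]
      · simp only [Set.indicator_apply, mem_Ioi, hy, if_false, gaussianPDF]
        rw [ENNReal.ofReal_of_nonpos (not_lt.1 hy), mul_zero]
    rw [hF, lintegral_indicator measurableSet_Ioi _,
      ← ofReal_integral_eq_lintegral_ofReal rhc_J_integrable ?_, rhc_J]
    exact (ae_restrict_iff' measurableSet_Ioi).2 (Eventually.of_forall fun y hy =>
      mul_nonneg (le_of_lt hy) (gaussianPDFReal_nonneg 0 1 y))
  · apply Measurable.aemeasurable
    have : (Function.uncurry fun v y => (Ici v).indicator (gaussianPDF 0 1) y)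
        = fun p : ℝ × ℝ => if p.1 ≤ p.2 then gaussianPDF 0 1 p.2 else 0 := by
      ext p
      simp [Function.uncurry, Set.indicator_apply]
    rw [this]
    exact Measurable.ite (measurableSet_le measurable_fst measurable_snd) (hpdfm.comp measurable_snd) measurable_const

lemma rhc_meas_tail : Measurable (fun v : ℝ => gaussianReal 0 1 (Ici v)) := by
  apply Antitone.measurable
  intro u v huv
  exact measure_mono (Ici_subset_Ici.2 huv)


lemma rhc_tail_integrableOn :
    IntegrableOn (fun v => (gaussianReal 0 1 (Ici v)).toReal) (Ioi (0:ℝ)) := by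
  apply integrable_toReal_of_lintegral_ne_top (rhc_meas_tail.aemeasurable)
  rw [rhc_lintegral_tail]; exact ENNReal.ofReal_ne_top

lemma rhc_tail_integral :
    ∫ v in Ioi (0:ℝ), (gaussianReal 0 1 (Ici v)).toReal
      = (Real.sqrt (2 * Real.pi))⁻¹ := by
  rw [integral_toReal rhc_meas_tail.aemeasurable
    (Eventually.of_forall fun v => measure_lt_top _ _), rhc_lintegral_tail,
    ENNReal.toReal_ofReal (by positivity)]

lemma rhc_gauss_Ici (v : NNReal) (hv : v ≠ 0) (u : ℝ) :
    gaussianReal 0 v (Ici u) = gaussianReal 0 1 (Ici (u / Real.sqrt v)) := by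
  have hσ : (0:ℝ) < Real.sqrt v := Real.sqrt_pos.2 (by exact_mod_cast hv.bot_lt)
  have hmap := gaussianReal_map_const_mul (μ := 0) (v := 1) (Real.sqrt v)
  have hvv : (NNReal.mk ((Real.sqrt v)^2) (sq_nonneg _) * 1 : NNReal) = v := by
    ext
    simp [Real.sq_sqrt v.coe_nonneg]
  rw [hvv, mul_zero] at hmap
  rw [← hmap, Measure.map_apply (by fun_prop) measurableSet_Ici]
  congr 1
  ext x
  simp only [mem_preimage, mem_Ici]
  rw [mul_comm]
  exact (div_le_iff₀ hσ).symm

lemma rhc_gauss_Iic (v : NNReal) (u : ℝ) :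
    gaussianReal 0 v (Iic u) = gaussianReal 0 v (Ici (-u)) := by
  have hmap := gaussianReal_map_const_mul (μ := 0) (v := v) (-1)
  have hvv : (NNReal.mk ((-1:ℝ)^2) (sq_nonneg _) * v : NNReal) = v := by
    ext; norm_num
  rw [hvv, mul_zero] at hmap
  conv_lhs => rw [← hmap]
  rw [Measure.map_apply (by fun_prop) measurableSet_Iic]
  congr 1
  ext x
  simp only [mem_preimage, mem_Iic, mem_Ici]
  constructor <;> intro h <;> linarith

lemma rhc_split (v : NNReal) {c d : ℝ} (hcd : c < d) :
    (gaussianReal 0 v (Ioo c d)).toReal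
      = 1 - (gaussianReal 0 v (Iic c)).toReal - (gaussianReal 0 v (Ici d)).toReal := by
  set μ := gaussianReal 0 v
  have hd1 : Disjoint (Iic c) (Ioo c d) := by
    apply Set.disjoint_left.2
    intro x hx1 hx2
    exact absurd hx2.1 (not_lt.2 hx1)
  have hd2 : Disjoint (Iio d) (Ici d) := by
    apply Set.disjoint_left.2
    intro x hx1 hx2
    exact absurd (show x < d from hx1) (not_lt.2 hx2)
  have h1 : μ (Iic c) + μ (Ioo c d) + μ (Ici d) = 1 := by
    rw [← measure_union hd1 measurableSet_Ioo, Iic_union_Ioo_eq_Iio hcd,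
      ← measure_union hd2 measurableSet_Ici, Iio_union_Ici, measure_univ]
  have f1 : μ (Iic c) ≠ ⊤ := measure_ne_top _ _
  have f2 : μ (Ioo c d) ≠ ⊤ := measure_ne_top _ _
  have f3 : μ (Ici d) ≠ ⊤ := measure_ne_top _ _
  have := congrArg ENNReal.toReal h1
  rw [ENNReal.toReal_add (by finiteness) f3, ENNReal.toReal_add f1 f2, ENNReal.toReal_one] at this
  linarith


/-- For a family `(X_t)` with `X_t ~ N(0, R_t)`, `R_t > 0`, `R_t → 0`
as `t ↓ 0`, and `D = (a,b)`, the regular heat content satisfies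
`lim_{t↓0} ((b-a) - H_D(t)) / √R_t = √(2/π)`. -/
theorem regular_heat_content_gaussian_limit
    {Ω : Type*} [MeasureSpace Ω] [IsProbabilityMeasure (ℙ : Measure Ω)]
    (a b : ℝ) (hab : a < b) (X : ℝ → Ω → ℝ) (R : ℝ → NNReal)
    (hRpos : ∀ t ∈ Set.Ioc (0:ℝ) 1, 0 < R t)
    (hlaw : ∀ t ∈ Set.Ioc (0:ℝ) 1, Measure.map (X t) ℙ = gaussianReal 0 (R t))
    (hRlim : Tendsto (fun t => (R t : ℝ)) (nhdsWithin 0 (Set.Ioc 0 1)) (nhds 0))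
    (H : ℝ → ℝ)
    (hH : ∀ t, H t = ∫ x in Set.Ioo a b, (ℙ {ω | X t ω + x ∈ Set.Ioo a b}).toReal) :
    Tendsto (fun t => ((b - a) - H t) / Real.sqrt (R t))
      (nhdsWithin 0 (Set.Ioc 0 1)) (nhds (Real.sqrt (2 / Real.pi))) := by
  set L := b - a with hLdef
  have hL0 : 0 < L := sub_pos.2 hab
  set g : ℝ → ℝ := fun w => (gaussianReal 0 1 (Ici w)).toReal with hgdef
  have hgmeas : Measurable g := ENNReal.measurable_toReal.comp rhc_meas_tail
  have hg01 : ∀ w, 0 ≤ g w ∧ g w ≤ 1 := fun w =>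
    ⟨ENNReal.toReal_nonneg, by
      have := prob_le_one (μ := gaussianReal 0 1) (s := Ici w)
      simpa using ENNReal.toReal_le_of_le_ofReal zero_le_one (by simpa using this)⟩
  -- limit of partial integrals
  have hlim1 : Tendsto (fun s : ℝ => ∫ w in (0:ℝ)..s, g w) atTop
      (nhds ((Real.sqrt (2 * Real.pi))⁻¹)) := by
    have := intervalIntegral_tendsto_integral_Ioi 0 rhc_tail_integrableOn tendsto_id
    rwa [rhc_tail_integral] at this
  have hσpos : ∀ t ∈ Ioc (0:ℝ) 1, 0 < Real.sqrt (R t) := fun t ht =>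
    Real.sqrt_pos.2 (by exact_mod_cast hRpos t ht)
  have hσlim : Tendsto (fun t => Real.sqrt (R t)) (nhdsWithin 0 (Ioc 0 1))
      (nhdsWithin 0 (Ioi 0)) := by
    rw [tendsto_nhdsWithin_iff]
    constructor
    · have hcont : Tendsto Real.sqrt (nhds 0) (nhds 0) := by
        have := Real.continuous_sqrt.tendsto 0
        rwa [Real.sqrt_zero] at this
      exact hcont.comp hRlim
    · exact eventually_mem_nhdsWithin.mono (fun t ht => hσpos t ht)
  have hratio : Tendsto (fun t => L / Real.sqrt (R t)) (nhdsWithin 0 (Ioc 0 1)) atTop := by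
    simp_rw [div_eq_mul_inv]
    exact (hσlim.inv_tendsto_nhdsGT_zero).const_mul_atTop hL0
  have hcomp : Tendsto (fun t => 2 * ∫ w in (0:ℝ)..(L / Real.sqrt (R t)), g w)
      (nhdsWithin 0 (Ioc 0 1)) (nhds (2 * (Real.sqrt (2 * Real.pi))⁻¹)) :=
    (hlim1.comp hratio).const_mul 2
  have hval : Real.sqrt (2 / Real.pi) = 2 * (Real.sqrt (2 * Real.pi))⁻¹ := by
    have hπ : (0:ℝ) < Real.pi := Real.pi_pos
    rw [show (2:ℝ) / Real.pi = 4 / (2 * Real.pi) by field_simp; ring]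
    rw [Real.sqrt_div (by norm_num : (0:ℝ) ≤ 4),
      show Real.sqrt 4 = 2 by
        rw [show (4:ℝ) = 2^2 by norm_num, Real.sqrt_sq (by norm_num : (0:ℝ) ≤ 2)],
      div_eq_mul_inv]
  rw [hval]
  refine Tendsto.congr' ?_ hcomp
  filter_upwards [eventually_mem_nhdsWithin] with t ht
  set v := R t with hvdef
  have hv : v ≠ 0 := (hRpos t ht).ne'
  set σ := Real.sqrt v with hσdef
  have hσ0 : 0 < σ := hσpos t ht
  haveI : IsFiniteMeasure (volume.restrict (Ioo a b)) := by
    constructor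
    rw [Measure.restrict_apply_univ]
    exact measure_Ioo_lt_top
  have hXmeas : AEMeasurable (X t) ℙ := by
    apply aemeasurable_of_map_neZero
    rw [hlaw t ht]
    infer_instance
  have hprob : ∀ x : ℝ, ℙ {ω | X t ω + x ∈ Ioo a b}
      = gaussianReal 0 v (Ioo (a - x) (b - x)) := by
    intro x
    have hset : {ω | X t ω + x ∈ Ioo a b} = X t ⁻¹' (Ioo (a - x) (b - x)) := by
      ext ω
      simp only [mem_setOf_eq, mem_preimage, mem_Ioo]
      constructor <;> rintro ⟨h1, h2⟩ <;> exact ⟨by linarith, by linarith⟩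
    rw [hset, ← Measure.map_apply_of_aemeasurable hXmeas measurableSet_Ioo, hlaw t ht]
  have hpt : ∀ x : ℝ, (ℙ {ω | X t ω + x ∈ Ioo a b}).toReal
      = 1 - g ((x - a) / σ) - g ((b - x) / σ) := by
    intro x
    rw [hprob x, rhc_split v (by linarith : a - x < b - x), rhc_gauss_Iic v (a - x),
      neg_sub, rhc_gauss_Ici v hv, rhc_gauss_Ici v hv]
  have hintg : ∀ φ : ℝ → ℝ, Measurable φ →
      Integrable (fun x => g (φ x)) (volume.restrict (Ioo a b)) := by
    intro φ hφ
    refine ⟨(hgmeas.comp hφ).aestronglyMeasurable, ?_⟩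
    apply HasFiniteIntegral.of_bounded (C := 1)
    filter_upwards with x
    rw [Real.norm_eq_abs, abs_le]
    exact ⟨by linarith [(hg01 (φ x)).1], (hg01 (φ x)).2⟩
  have hG1 : Integrable (fun x => g ((x - a) / σ)) (volume.restrict (Ioo a b)) :=
    hintg _ (by fun_prop)
  have hG2 : Integrable (fun x => g ((b - x) / σ)) (volume.restrict (Ioo a b)) :=
    hintg _ (by fun_prop)
  have hHt : H t = L - (∫ x in Ioo a b, g ((x - a) / σ))
      - ∫ x in Ioo a b, g ((b - x) / σ) := by
    rw [hH t]
    have hcg : ∫ x in Ioo a b, (ℙ {ω | X t ω + x ∈ Ioo a b}).toReal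
        = ∫ x in Ioo a b, (1 - g ((x - a) / σ) - g ((b - x) / σ)) :=
      integral_congr_ae (Eventually.of_forall fun x => hpt x)
    have e1 : ∫ x in Ioo a b, (1 - g ((x - a) / σ) - g ((b - x) / σ))
        = (∫ x in Ioo a b, (1 - g ((x - a) / σ))) - ∫ x in Ioo a b, g ((b - x) / σ) :=
      integral_sub ((integrable_const 1).sub hG1) hG2
    have e2 : ∫ x in Ioo a b, (1 - g ((x - a) / σ))
        = (∫ x in Ioo a b, (1:ℝ)) - ∫ x in Ioo a b, g ((x - a) / σ) :=
      integral_sub (integrable_const 1) hG1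
    have e3 : ∫ x in Ioo a b, (1:ℝ) = L := by
      rw [setIntegral_const, smul_eq_mul, mul_one, measureReal_def, Real.volume_Ioo,
        ENNReal.toReal_ofReal hL0.le]
    rw [hcg, e1, e2, e3]
  have hchg1 : ∫ x in Ioo a b, g ((x - a) / σ) = σ * ∫ w in (0:ℝ)..(L / σ), g w := by
    rw [← integral_Ioc_eq_integral_Ioo, ← intervalIntegral.integral_of_le hab.le,
      intervalIntegral.integral_comp_sub_right (fun y => g (y / σ)) a, sub_self,
      intervalIntegral.integral_comp_div (fun w => g w) hσ0.ne', zero_div, smul_eq_mul, hLdef]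
  have hchg2 : ∫ x in Ioo a b, g ((b - x) / σ) = σ * ∫ w in (0:ℝ)..(L / σ), g w := by
    rw [← integral_Ioc_eq_integral_Ioo, ← intervalIntegral.integral_of_le hab.le,
      intervalIntegral.integral_comp_sub_left (fun y => g (y / σ)) b, sub_self,
      intervalIntegral.integral_comp_div (fun w => g w) hσ0.ne', zero_div, smul_eq_mul, hLdef]
  rw [hHt, hchg1, hchg2]
  field_simp
  ring
end

section
/- Let D = (a,b) with a < b and let X_t be a real random variable that is symmetric, i.e., −X_t has the same distribution as X_t. Then (b−a) − ∫_a^b ℙ(X_t + x ∈ (a,b)) dx = 2 ∫_0^{b−a} ℙ(X_t > u) du. -/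
open MeasureTheory ProbabilityTheory Set

/-- For a symmetric real random variable `X_t` and `D = (a,b)`,
`(b-a) - ∫_a^b ℙ(X_t + x ∈ (a,b)) dx = 2 ∫_0^{b-a} ℙ(X_t > u) du`. -/
theorem regular_heat_content_symmetric_identity
    {Ω : Type*} [MeasureSpace Ω] [IsProbabilityMeasure (ℙ : Measure Ω)]
    (a b : ℝ) (hab : a < b) (X : Ω → ℝ) (hX : Measurable X)
    (hsym : Measure.map (fun ω => -X ω) ℙ = Measure.map X ℙ) :
    (b - a) - ∫ x in Set.Ioo a b, (ℙ {ω | X ω + x ∈ Set.Ioo a b}).toReal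
      = 2 * ∫ u in Set.Ioo (0:ℝ) (b - a), (ℙ {ω | u < X ω}).toReal := by
  set g : ℝ → ℝ := fun u => (ℙ {ω | u ≤ X ω}).toReal with hg_def
  -- g is antitone, hence measurable
  have hg_anti : Antitone g := by
    intro u v huv
    exact ENNReal.toReal_mono (measure_ne_top _ _)
      (measure_mono (fun ω hω => le_trans huv hω))
  have hg_meas : Measurable g := hg_anti.measurable
  have hg_nonneg : ∀ u, 0 ≤ g u := fun u => ENNReal.toReal_nonneg
  have hg_le_one : ∀ u, g u ≤ 1 := by
    intro u
    have : (ℙ {ω | u ≤ X ω}) ≤ 1 := prob_le_one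
    simpa using ENNReal.toReal_mono ENNReal.one_ne_top this
  -- symmetry
  have hsymm : ∀ c : ℝ, ℙ {ω | X ω ≤ c} = ℙ {ω | -c ≤ X ω} := by
    intro c
    have h1 : ℙ {ω | X ω ≤ c} = (Measure.map (fun ω => -X ω) ℙ) (Set.Ici (-c)) := by
      rw [Measure.map_apply (f := fun ω => -X ω) hX.neg measurableSet_Ici]
      congr 1
      ext ω
      simp only [Set.mem_setOf_eq, Set.mem_preimage, Set.mem_Ici, neg_le_neg_iff]
    rw [h1, hsym, Measure.map_apply hX measurableSet_Ici]
    rfl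
  -- pointwise identity
  have key : ∀ x : ℝ, (ℙ {ω | X ω + x ∈ Set.Ioo a b}).toReal = 1 - g (x - a) - g (b - x) := by
    intro x
    have hC : {ω | X ω + x ∈ Set.Ioo a b} = ({ω | X ω ≤ a - x} ∪ {ω | b - x ≤ X ω})ᶜ := by
      ext ω
      simp only [Set.mem_Ioo, Set.mem_setOf_eq, Set.mem_compl_iff, Set.mem_union, not_or, not_le]
      constructor
      · rintro ⟨h1, h2⟩; exact ⟨by linarith, by linarith⟩
      · rintro ⟨h1, h2⟩; exact ⟨by linarith, by linarith⟩
    have hA : MeasurableSet {ω | X ω ≤ a - x} := hX measurableSet_Iic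
    have hB : MeasurableSet {ω | b - x ≤ X ω} := hX measurableSet_Ici
    have hdisj : Disjoint {ω : Ω | X ω ≤ a - x} {ω : Ω | b - x ≤ X ω} := by
      rw [Set.disjoint_left]
      intro ω h1 h2
      simp only [Set.mem_setOf_eq] at h1 h2
      linarith
    have hunion : ℙ ({ω | X ω ≤ a - x} ∪ {ω | b - x ≤ X ω})
        = ℙ {ω | X ω ≤ a - x} + ℙ {ω | b - x ≤ X ω} := measure_union hdisj hB
    have hle : ℙ {ω | X ω ≤ a - x} + ℙ {ω | b - x ≤ X ω} ≤ 1 := by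
      rw [← hunion]; exact prob_le_one
    rw [hC, prob_compl_eq_one_sub (hA.union hB), hunion,
      ENNReal.toReal_sub_of_le hle ENNReal.one_ne_top,
      ENNReal.toReal_add (measure_ne_top _ _) (measure_ne_top _ _)]
    have h1 : (ℙ {ω | X ω ≤ a - x}).toReal = g (x - a) := by
      rw [hsymm (a - x)]
      simp only [hg_def, neg_sub]
    have h2 : (ℙ {ω | b - x ≤ X ω}).toReal = g (b - x) := rfl
    rw [h1, h2, ENNReal.toReal_one]
    ring
  -- integrability facts
  have hvol : volume (Set.Ioo a b) < ⊤ := measure_Ioo_lt_top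
  have hconst : IntegrableOn (fun _ : ℝ => (1 : ℝ)) (Set.Ioo a b) volume :=
    (integrableOn_const_iff).mpr (Or.inr hvol)
  have hint1 : IntegrableOn (fun x => g (x - a)) (Set.Ioo a b) volume := by
    refine hconst.mono' ((hg_meas.comp (measurable_id.sub_const a)).aestronglyMeasurable) ?_
    filter_upwards with x
    rw [Real.norm_eq_abs, abs_of_nonneg (hg_nonneg _)]
    exact hg_le_one _
  have hint2 : IntegrableOn (fun x => g (b - x)) (Set.Ioo a b) volume := by
    refine hconst.mono' ((hg_meas.comp (measurable_const.sub measurable_id)).aestronglyMeasurable) ?_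
    filter_upwards with x
    rw [Real.norm_eq_abs, abs_of_nonneg (hg_nonneg _)]
    exact hg_le_one _
  -- change of variables
  have hL : (0:ℝ) ≤ b - a := by linarith
  have hCoV1 : ∫ x in Set.Ioo a b, g (x - a) = ∫ u in Set.Ioo (0:ℝ) (b - a), g u := by
    rw [← MeasureTheory.integral_Ioc_eq_integral_Ioo, ← intervalIntegral.integral_of_le hab.le,
      intervalIntegral.integral_comp_sub_right g a, sub_self,
      intervalIntegral.integral_of_le hL, MeasureTheory.integral_Ioc_eq_integral_Ioo]
  have hCoV2 : ∫ x in Set.Ioo a b, g (b - x) = ∫ u in Set.Ioo (0:ℝ) (b - a), g u := by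
    rw [← MeasureTheory.integral_Ioc_eq_integral_Ioo, ← intervalIntegral.integral_of_le hab.le,
      intervalIntegral.integral_comp_sub_left g b, sub_self,
      intervalIntegral.integral_of_le hL, MeasureTheory.integral_Ioc_eq_integral_Ioo]
  -- main integral computation
  have hmain : ∫ x in Set.Ioo a b, (ℙ {ω | X ω + x ∈ Set.Ioo a b}).toReal
      = (b - a) - 2 * ∫ u in Set.Ioo (0:ℝ) (b - a), g u := by
    rw [MeasureTheory.setIntegral_congr_fun measurableSet_Ioo (fun x _ => key x)]
    have hsub : Integrable (fun x : ℝ => 1 - g (x - a)) (volume.restrict (Set.Ioo a b)) :=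
      hconst.sub hint1
    rw [MeasureTheory.integral_sub hsub hint2, MeasureTheory.integral_sub hconst hint1]
    rw [MeasureTheory.setIntegral_const, measureReal_def, Real.volume_Ioo, ENNReal.toReal_ofReal hL,
      smul_eq_mul, mul_one, hCoV1, hCoV2]
    ring
  -- replace ≤ by < a.e.
  have hae : ∫ u in Set.Ioo (0:ℝ) (b - a), g u
      = ∫ u in Set.Ioo (0:ℝ) (b - a), (ℙ {ω | u < X ω}).toReal := by
    refine MeasureTheory.integral_congr_ae ?_
    have h := MeasureTheory.meas_le_ae_eq_meas_lt (μ := (ℙ : Measure Ω)) (volume : Measure ℝ) X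
    filter_upwards [ae_restrict_of_ae h] with u hu
    simp only [hg_def, hu]
  rw [hmain, hae]
  ring
end

section
/- Let D = (a,b) with a < b and let (X_t)_{t∈(0,1]} be real random variables such that for each t ∈ (0,1]: X_t is integrable, −X_t has the same distribution as X_t, and E[X_t·1_{X_t ≥ 0}] > 0. Assume that ∫_{b−a}^∞ ℙ(X_t > u) du = o(E[X_t·1_{X_t ≥ 0}]) as t ↓ 0. Then lim_{t↓0} ((b−a) − H_D(t)) / E[X_t·1_{X_t ≥ 0}] = 2. -/
open MeasureTheory ProbabilityTheory Filter Set

/-- For a family of integrable symmetric random variables `(X_t)` with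
`E[X_t 1_{X_t ≥ 0}] > 0` and `∫_{b-a}^∞ ℙ(X_t > u) du = o(E[X_t 1_{X_t ≥ 0}])` as `t ↓ 0`,
the regular heat content of `D = (a,b)` satisfies
`lim_{t↓0} ((b-a) - H_D(t)) / E[X_t 1_{X_t ≥ 0}] = 2`. -/
theorem regular_heat_content_symmetric_limit
    {Ω : Type*} [MeasureSpace Ω] [IsProbabilityMeasure (ℙ : Measure Ω)]
    (a b : ℝ) (hab : a < b) (X : ℝ → Ω → ℝ)
    (hint : ∀ t ∈ Set.Ioc (0:ℝ) 1, Integrable (X t) ℙ)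
    (hsym : ∀ t ∈ Set.Ioc (0:ℝ) 1,
      Measure.map (fun ω => -X t ω) ℙ = Measure.map (X t) ℙ)
    (m H : ℝ → ℝ)
    (hm : ∀ t, m t = ∫ ω in {ω | 0 ≤ X t ω}, X t ω ∂ℙ)
    (hmpos : ∀ t ∈ Set.Ioc (0:ℝ) 1, 0 < m t)
    (hH : ∀ t, H t = ∫ x in Set.Ioo a b, (ℙ {ω | X t ω + x ∈ Set.Ioo a b}).toReal)
    (hlittleo : Tendsto
      (fun t => (∫ u in Set.Ioi (b - a), (ℙ {ω | u < X t ω}).toReal) / m t)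
      (nhdsWithin 0 (Set.Ioc 0 1)) (nhds 0)) :
    Tendsto (fun t => ((b - a) - H t) / m t) (nhdsWithin 0 (Set.Ioc 0 1)) (nhds 2) := by
  set c := b - a with hcdef
  have hc : 0 < c := sub_pos.mpr hab
  -- the key per-`t` identity
  have key : ∀ t ∈ Set.Ioc (0:ℝ) 1,
      (b - a) - H t
        = 2 * (m t - ∫ u in Set.Ioi (b - a), (ℙ {ω | u < X t ω}).toReal) := by
    intro t ht
    have hInt : Integrable (X t) ℙ := hint t ht
    obtain ⟨Y', hY'sm, hYY'⟩ := hInt.1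
    have hY'm : Measurable Y' := hY'sm.measurable
    have hInt' : Integrable Y' ℙ := hInt.congr hYY'
    -- (1) m t = ∫ max (Y' ω) 0
    have hm1 : m t = ∫ ω, max (Y' ω) 0 ∂ℙ := by
      have hset : {ω | 0 ≤ X t ω} =ᵐ[ℙ] {ω | 0 ≤ Y' ω} := by
        filter_upwards [hYY'] with ω hω
        exact congrArg (fun r => 0 ≤ r) hω
      have h1 : ∫ ω in {ω | 0 ≤ X t ω}, X t ω ∂ℙ = ∫ ω in {ω | 0 ≤ Y' ω}, X t ω ∂ℙ :=
        setIntegral_congr_set hset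
      have h2 : ∫ ω in {ω | 0 ≤ Y' ω}, X t ω ∂ℙ = ∫ ω in {ω | 0 ≤ Y' ω}, Y' ω ∂ℙ :=
        integral_congr_ae (ae_restrict_of_ae hYY')
      have h3 : ∫ ω in {ω | 0 ≤ Y' ω}, Y' ω ∂ℙ
          = ∫ ω, Set.indicator {ω | 0 ≤ Y' ω} Y' ω ∂ℙ :=
        (integral_indicator (measurableSet_le measurable_const hY'm)).symm
      rw [hm t, h1, h2, h3]
      refine integral_congr_ae (Eventually.of_forall fun ω => ?_)
      rcases le_total 0 (Y' ω) with h | h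
      · simp [Set.indicator_apply, h, max_eq_left h]
      · simp [Set.indicator_apply, h, max_eq_right h,
          Set.mem_setOf_eq]
        intro h'
        exact le_antisymm h h'
    -- (2) layer cake
    have hmax_nn : 0 ≤ᵐ[ℙ] fun ω => max (Y' ω) 0 :=
      Eventually.of_forall fun ω => le_max_right _ _
    have hmax_int : Integrable (fun ω => max (Y' ω) 0) ℙ := hInt'.pos_part
    have hlayer : ENNReal.ofReal (m t) = ∫⁻ u in Set.Ioi 0, ℙ {ω | u < Y' ω} := by
      rw [hm1, ofReal_integral_eq_lintegral_ofReal hmax_int hmax_nn,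
        lintegral_eq_lintegral_meas_lt ℙ hmax_nn hmax_int.aemeasurable]
      refine setLIntegral_congr_fun measurableSet_Ioi
        (fun u hu => ?_)
      congr 1
      ext ω
      simp only [Set.mem_setOf_eq, lt_max_iff]
      exact or_iff_left (asymm hu)
    -- survival function facts
    have hSanti : Antitone fun u : ℝ => ℙ {ω | u < Y' ω} :=
      fun _ _ hst => measure_mono fun _ h => lt_of_le_of_lt hst h
    have hSmeas : Measurable fun u : ℝ => ℙ {ω | u < Y' ω} := hSanti.measurable
    have hQanti : Antitone fun u : ℝ => ℙ {ω | u ≤ Y' ω} :=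
      fun _ _ hst => measure_mono fun _ h => le_trans hst h
    have hQmeas : Measurable fun u : ℝ => ℙ {ω | u ≤ Y' ω} := hQanti.measurable
    -- (4) split the layer cake integral
    have hsplit : (∫⁻ u in Set.Ioi (0:ℝ), ℙ {ω | u < Y' ω})
        = (∫⁻ u in Set.Ioo 0 c, ℙ {ω | u < Y' ω})
          + ∫⁻ u in Set.Ioi c, ℙ {ω | u < Y' ω} := by
      have hIci : (∫⁻ u in Set.Ici c, ℙ {ω | u < Y' ω})
          = ∫⁻ u in Set.Ioi c, ℙ {ω | u < Y' ω} :=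
        (setLIntegral_congr (Ioi_ae_eq_Ici (a := c)).symm)
      rw [← hIci, ← lintegral_union measurableSet_Ici
        (by
          rw [Set.disjoint_left]
          rintro x ⟨_, h2⟩ h3
          exact (not_le.mpr h2) h3), Set.Ioo_union_Ici_eq_Ioi hc]
    -- (5) tail in terms of Y'
    have htail_sets : ∀ u : ℝ, ℙ {ω | u < X t ω} = ℙ {ω | u < Y' ω} := fun u =>
      measure_congr (by filter_upwards [hYY'] with ω hω; exact congrArg (fun r => u < r) hω)
    have htail : (∫ u in Set.Ioi c, (ℙ {ω | u < X t ω}).toReal)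
        = (∫⁻ u in Set.Ioi c, ℙ {ω | u < Y' ω}).toReal := by
      simp_rw [htail_sets]
      exact integral_toReal hSmeas.aemeasurable
        (Eventually.of_forall fun _ => measure_lt_top _ _)
    -- (7) symmetry
    have hmapY : Measure.map Y' ℙ = Measure.map (fun ω => -Y' ω) ℙ := by
      calc Measure.map Y' ℙ = Measure.map (X t) ℙ := (Measure.map_congr hYY').symm
        _ = Measure.map (fun ω => -X t ω) ℙ := (hsym t ht).symm
        _ = Measure.map (fun ω => -Y' ω) ℙ :=
            Measure.map_congr (by filter_upwards [hYY'] with ω hω; rw [hω])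
    have hflip : ∀ s : ℝ, ℙ {ω | Y' ω ≤ s} = ℙ {ω | -s ≤ Y' ω} := by
      intro s
      have h1 : ℙ {ω | Y' ω ≤ s} = Measure.map Y' ℙ (Set.Iic s) := by
        rw [Measure.map_apply hY'm measurableSet_Iic]; rfl
      have h2 : Measure.map (fun ω => -Y' ω) ℙ (Set.Iic s) = ℙ {ω | -s ≤ Y' ω} := by
        rw [Measure.map_apply (f := fun ω => -Y' ω) (hY'm.neg : Measurable fun ω => -Y' ω) measurableSet_Iic]
        congr 1
        ext ω
        simp [Set.mem_setOf_eq, neg_le]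
      rw [h1, hmapY, h2]
    -- the two half integrands
    set q : ℝ → ℝ := fun u => (ℙ {ω | u ≤ Y' ω}).toReal with hq_def
    have hqmeas : Measurable q := hQmeas.ennreal_toReal
    have hqbd : ∀ u, ‖q u‖ ≤ 1 := by
      intro u
      rw [Real.norm_eq_abs, abs_of_nonneg ENNReal.toReal_nonneg]
      have := ENNReal.toReal_mono (measure_ne_top ℙ Set.univ)
        (measure_mono (Set.subset_univ {ω | u ≤ Y' ω}))
      simpa using this
    have hg1int : IntegrableOn (fun x => q (x - a)) (Set.Ioo a b) := by
      refine Integrable.mono' (integrable_const 1)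
        ((hqmeas.comp (measurable_id.sub measurable_const)).aestronglyMeasurable)
        (Eventually.of_forall fun x => hqbd _)
    have hg2int : IntegrableOn (fun x => q (b - x)) (Set.Ioo a b) := by
      refine Integrable.mono' (integrable_const 1)
        ((hqmeas.comp (measurable_const.sub measurable_id)).aestronglyMeasurable)
        (Eventually.of_forall fun x => hqbd _)
    -- (6) pointwise decomposition of the heat content integrand
    have hx_eq : ∀ x ∈ Set.Ioo a b,
        (ℙ {ω | X t ω + x ∈ Set.Ioo a b}).toReal = 1 - q (x - a) - q (b - x) := by
      intro x hx
      have hswap : ℙ {ω | X t ω + x ∈ Set.Ioo a b} = ℙ {ω | Y' ω + x ∈ Set.Ioo a b} :=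
        measure_congr (by filter_upwards [hYY'] with ω hω; exact congrArg (fun r => r + x ∈ Set.Ioo a b) hω)
      set A : Set Ω := {ω | Y' ω + x ∈ Set.Ioo a b} with hA_def
      have hA : MeasurableSet A := by
        have : A = {ω | a - x < Y' ω} ∩ {ω | Y' ω < b - x} := by
          ext ω
          simp only [hA_def, Set.mem_setOf_eq, Set.mem_Ioo, Set.mem_inter_iff]
          constructor
          · rintro ⟨h1, h2⟩; exact ⟨by linarith, by linarith⟩
          · rintro ⟨h1, h2⟩; exact ⟨by linarith, by linarith⟩
        rw [this]
        exact (measurableSet_lt measurable_const hY'm).inter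
          (measurableSet_lt hY'm measurable_const)
      have hAc : Aᶜ = {ω | Y' ω ≤ a - x} ∪ {ω | b - x ≤ Y' ω} := by
        ext ω
        simp only [hA_def, Set.mem_compl_iff, Set.mem_setOf_eq, Set.mem_Ioo,
          Set.mem_union, not_and_or, not_lt]
        constructor
        · rintro (h | h)
          · left; linarith
          · right; linarith
        · rintro (h | h)
          · left; linarith
          · right; linarith
      have hdisj : Disjoint {ω | Y' ω ≤ a - x} {ω | b - x ≤ Y' ω} := by
        rw [Set.disjoint_left]
        intro ω h1 h2
        simp only [Set.mem_setOf_eq] at h1 h2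
        have hx1 := hx.1
        have hx2 := hx.2
        linarith
      have hAcm : ℙ Aᶜ = ℙ {ω | Y' ω ≤ a - x} + ℙ {ω | b - x ≤ Y' ω} := by
        rw [hAc, measure_union hdisj (measurableSet_le measurable_const hY'm)]
      have hsum : (ℙ A).toReal + (ℙ Aᶜ).toReal = 1 := by
        rw [← ENNReal.toReal_add (measure_ne_top _ _) (measure_ne_top _ _),
          measure_add_measure_compl hA]
        simp
      have hq1 : (ℙ {ω | Y' ω ≤ a - x}).toReal = q (x - a) := by
        rw [hflip (a - x)]
        simp only [hq_def, neg_sub]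
      have hq2 : (ℙ {ω | b - x ≤ Y' ω}).toReal = q (b - x) := rfl
      have hAcsum : (ℙ Aᶜ).toReal = q (x - a) + q (b - x) := by
        rw [hAcm, ENNReal.toReal_add (measure_ne_top _ _) (measure_ne_top _ _), hq1, hq2]
      rw [hswap]
      linarith [hsum, hAcsum]
    -- rewrite H t
    have hH1 : H t = ∫ x in Set.Ioo a b, (1 - q (x - a) - q (b - x)) := by
      rw [hH t]
      exact setIntegral_congr_fun measurableSet_Ioo fun x hx => hx_eq x hx
    have hH2 : (b - a) - H t
        = (∫ x in Set.Ioo a b, q (x - a)) + ∫ x in Set.Ioo a b, q (b - x) := by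
      have hconst : ∫ x in Set.Ioo a b, (1:ℝ) = b - a := by
        simp [Real.volume_Ioo, ENNReal.toReal_ofReal (le_of_lt (sub_pos.mpr hab)), hab.le]
      have hint1 : IntegrableOn (fun x => 1 - q (x - a)) (Set.Ioo a b) :=
        (integrable_const 1).sub hg1int
      rw [hH1, integral_sub hint1 hg2int, integral_sub (integrable_const 1) hg1int, hconst]
      ring
    -- (8) substitutions
    have hsub1 : (∫ x in Set.Ioo a b, q (x - a)) = ∫ u in Set.Ioo 0 c, q u := by
      have hmp := measurePreserving_sub_right (volume : Measure ℝ) a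
      have hkey := hmp.setIntegral_preimage_emb
        (MeasurableEquiv.subRight a).measurableEmbedding q (Set.Ioo 0 c)
      have hpre : (fun x : ℝ => x - a) ⁻¹' Set.Ioo 0 c = Set.Ioo a b := by
        ext x
        simp only [Set.mem_preimage, Set.mem_Ioo, hcdef]
        constructor
        · rintro ⟨h1, h2⟩; exact ⟨by linarith, by linarith⟩
        · rintro ⟨h1, h2⟩; exact ⟨by linarith, by linarith⟩
      rw [← hpre]
      exact hkey
    have hsub2 : (∫ x in Set.Ioo a b, q (b - x)) = ∫ u in Set.Ioo 0 c, q u := by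
      have hmp := Measure.measurePreserving_sub_left (volume : Measure ℝ) b
      have hkey := hmp.setIntegral_preimage_emb
        (MeasurableEquiv.subLeft b).measurableEmbedding q (Set.Ioo 0 c)
      have hpre : (fun x : ℝ => b - x) ⁻¹' Set.Ioo 0 c = Set.Ioo a b := by
        ext x
        simp only [Set.mem_preimage, Set.mem_Ioo, hcdef]
        constructor
        · rintro ⟨h1, h2⟩; exact ⟨by linarith, by linarith⟩
        · rintro ⟨h1, h2⟩; exact ⟨by linarith, by linarith⟩
      rw [← hpre]
      exact hkey
    -- (9) q-integral as lintegral with strict inequality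
    have hqint : (∫ u in Set.Ioo 0 c, q u)
        = (∫⁻ u in Set.Ioo 0 c, ℙ {ω | u < Y' ω}).toReal := by
      rw [hq_def]
      rw [integral_toReal hQmeas.aemeasurable
        (Eventually.of_forall fun _ => measure_lt_top _ _)]
      congr 1
      exact lintegral_congr_ae (meas_le_ae_eq_meas_lt ℙ (volume.restrict (Set.Ioo 0 c)) Y')
    -- (10) assemble
    set L1 := ∫⁻ u in Set.Ioo 0 c, ℙ {ω | u < Y' ω} with hL1def
    set L2 := ∫⁻ u in Set.Ioi c, ℙ {ω | u < Y' ω} with hL2def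
    have hfin : L1 + L2 ≠ ⊤ := by
      rw [← hsplit, ← hlayer]; exact ENNReal.ofReal_ne_top
    have hL1fin : L1 ≠ ⊤ := fun h => hfin (by simp [h])
    have hL2fin : L2 ≠ ⊤ := fun h => hfin (by simp [h])
    have hm2 : m t = L1.toReal + L2.toReal := by
      have h := congrArg ENNReal.toReal hlayer
      rw [ENNReal.toReal_ofReal (le_of_lt (hmpos t ht))] at h
      rw [h, hsplit, ENNReal.toReal_add hL1fin hL2fin]
    rw [hH2, hsub1, hsub2, hqint, ← hcdef, htail, hm2]
    ring
  -- final limit computation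
  have h2 : Tendsto (fun t => 2 - 2 *
      ((∫ u in Set.Ioi (b - a), (ℙ {ω | u < X t ω}).toReal) / m t))
      (nhdsWithin 0 (Set.Ioc 0 1)) (nhds 2) := by
    have h0 := hlittleo.const_mul (2:ℝ)
    have h1 := (tendsto_const_nhds (x := (2:ℝ))
      (f := nhdsWithin (0:ℝ) (Set.Ioc 0 1))).sub h0
    simpa using h1
  refine h2.congr' ?_
  filter_upwards [eventually_mem_nhdsWithin] with t ht
  have hmt := hmpos t ht
  rw [key t ht]
  field_simp
end

section
/- Let D = (a,b) with a < b, let H > 0, and let (X_t)_{t∈(0,1]} be real random variables such that X_1 is integrable with E[X_1·1_{X_1 ≥ 0}] > 0, and for each t ∈ (0,1]: −X_t has the same distribution as X_t and X_t has the same distribution as t^H · X_1. Then lim_{t↓0} ((b−a) − H_D(t)) / t^H = 2·E[X_1·1_{X_1 ≥ 0}]. -/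
open MeasureTheory ProbabilityTheory Filter Set

lemma aux_layercake {Ω : Type*} [MeasureSpace Ω] [IsProbabilityMeasure (ℙ : Measure Ω)]
    (Y : Ω → ℝ) (hint : Integrable Y ℙ) :
    IntegrableOn (fun v => (ℙ {ω | v ≤ Y ω}).toReal) (Ioi (0:ℝ)) ∧
    ∫ v in Ioi (0:ℝ), (ℙ {ω | v ≤ Y ω}).toReal = ∫ ω in {ω | 0 ≤ Y ω}, Y ω ∂ℙ := by
  set f : Ω → ℝ := fun ω => max (Y ω) 0 with hf_def
  have hf : Integrable f ℙ := hint.pos_part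
  have f_nn : 0 ≤ᵐ[ℙ] f := Eventually.of_forall fun ω => le_max_right _ _
  have hsets : ∀ v : ℝ, 0 < v → {ω | v ≤ f ω} = {ω | v ≤ Y ω} := by
    intro v hv
    ext ω
    simp only [hf_def, mem_setOf_eq, le_max_iff]
    exact ⟨fun h => h.resolve_right fun h' => absurd (hv.trans_le h') (lt_irrefl _), Or.inl⟩
  have F_anti : Antitone (fun v : ℝ => (ℙ {ω | v ≤ Y ω}).toReal) := by
    intro v w hvw
    exact ENNReal.toReal_mono (measure_ne_top _ _)
      (measure_mono fun ω h => hvw.trans h)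
  have F_mble : Measurable (fun v : ℝ => (ℙ {ω | v ≤ Y ω}).toReal) := F_anti.measurable
  have F_nn : ∀ v : ℝ, 0 ≤ (ℙ {ω | v ≤ Y ω}).toReal := fun v => ENNReal.toReal_nonneg
  have key := hf.integral_eq_integral_meas_le f_nn
  have hIcongr : ∫ v in Ioi (0:ℝ), (ℙ {ω | v ≤ Y ω}).toReal
      = ∫ v in Ioi (0:ℝ), (ℙ {ω | v ≤ f ω}).toReal := by
    refine setIntegral_congr_fun measurableSet_Ioi fun v hv => ?_
    rw [hsets v hv]
  have hlin : ∫⁻ v in Ioi (0:ℝ), ℙ {ω | v ≤ Y ω} = ∫⁻ ω, ENNReal.ofReal (f ω) ∂ℙ := by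
    rw [lintegral_eq_lintegral_meas_le ℙ f_nn hf.aemeasurable]
    refine setLIntegral_congr_fun measurableSet_Ioi (fun v hv => ?_)
    rw [hsets v hv]
  have hIO : IntegrableOn (fun v => (ℙ {ω | v ≤ Y ω}).toReal) (Ioi (0:ℝ)) := by
    refine ⟨F_mble.aestronglyMeasurable.restrict, ?_⟩
    rw [hasFiniteIntegral_iff_ofReal (Eventually.of_forall fun v => F_nn v)]
    calc ∫⁻ v in Ioi (0:ℝ), ENNReal.ofReal ((ℙ {ω | v ≤ Y ω}).toReal)
        = ∫⁻ v in Ioi (0:ℝ), ℙ {ω | v ≤ Y ω} := by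
          refine setLIntegral_congr_fun measurableSet_Ioi (fun v _ => ?_)
          exact ENNReal.ofReal_toReal (measure_ne_top _ _)
      _ = ∫⁻ ω, ENNReal.ofReal (f ω) ∂ℙ := hlin
      _ < ⊤ := hf.lintegral_lt_top
  refine ⟨hIO, ?_⟩
  have hset_int : ∫ ω in {ω | 0 ≤ Y ω}, Y ω ∂ℙ = ∫ ω, f ω ∂ℙ := by
    have hs : NullMeasurableSet {ω | 0 ≤ Y ω} ℙ :=
      nullMeasurableSet_le aemeasurable_const hint.aemeasurable
    rw [← integral_add_compl₀ hs hf]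
    have h1 : ∫ ω in {ω | 0 ≤ Y ω}, f ω ∂ℙ = ∫ ω in {ω | 0 ≤ Y ω}, Y ω ∂ℙ := by
      refine setIntegral_congr_ae₀ hs (Eventually.of_forall fun ω hω => ?_)
      exact max_eq_left (by exact hω)
    have h2 : ∫ ω in {ω | 0 ≤ Y ω}ᶜ, f ω ∂ℙ = 0 := by
      have : ∀ ω ∈ {ω | 0 ≤ Y ω}ᶜ, f ω = 0 := by
        intro ω hω
        simp only [mem_compl_iff, mem_setOf_eq, not_le] at hω
        simp [hf_def, max_eq_right hω.le]
      calc ∫ ω in {ω | 0 ≤ Y ω}ᶜ, f ω ∂ℙ = ∫ ω in {ω | 0 ≤ Y ω}ᶜ, (0:ℝ) ∂ℙ := by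
            refine setIntegral_congr_ae₀ hs.compl (Eventually.of_forall fun ω hω => this ω hω)
        _ = 0 := by simp
    rw [h1, h2, add_zero]
  rw [hIcongr, hset_int, key]
  rfl


lemma aux_heat {Ω : Type*} [MeasureSpace Ω] [IsProbabilityMeasure (ℙ : Measure Ω)]
    (a b : ℝ) (hab : a < b) (Y Z : Ω → ℝ) (s : ℝ) (hs : 0 < s)
    (hYint : Integrable Y ℙ)
    (hsym : Measure.map (fun ω => -Z ω) ℙ = Measure.map Z ℙ)
    (hss : Measure.map Z ℙ = Measure.map (fun ω => s * Y ω) ℙ) :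
    (b - a) - ∫ x in Ioo a b, (ℙ {ω | Z ω + x ∈ Ioo a b}).toReal
      = 2 * (s * ∫ v in (0:ℝ)..((b-a)/s), (ℙ {ω | v ≤ Y ω}).toReal) := by
  set F : ℝ → ℝ := fun v => (ℙ {ω | v ≤ Y ω}).toReal with hF_def
  have hY : AEMeasurable Y ℙ := hYint.aemeasurable
  have hsY : AEMeasurable (fun ω => s * Y ω) ℙ := hY.const_mul s
  have hZ : AEMeasurable Z ℙ := by
    by_contra h
    have h0 : Measure.map Z ℙ = 0 := Measure.map_of_not_aemeasurable h
    have : IsProbabilityMeasure (Measure.map (fun ω => s * Y ω) ℙ) :=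
      Measure.isProbabilityMeasure_map hsY
    have h1 : (Measure.map (fun ω => s * Y ω) ℙ) univ = 1 := measure_univ
    rw [← hss, h0] at h1
    simp at h1
  have hIci : ∀ u : ℝ, (Measure.map Z ℙ) (Ici u) = ℙ {ω | u / s ≤ Y ω} := by
    intro u
    rw [hss, Measure.map_apply_of_aemeasurable hsY measurableSet_Ici]
    congr 1
    ext ω
    simp only [mem_preimage, mem_Ici, mem_setOf_eq, div_le_iff₀ hs, mul_comm]
  have hIic : ∀ c : ℝ, (Measure.map Z ℙ) (Iic c) = (Measure.map Z ℙ) (Ici (-c)) := by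
    intro c
    conv_lhs => rw [← hsym]
    rw [Measure.map_apply_of_aemeasurable (f := fun ω => -Z ω) hZ.neg measurableSet_Iic,
      Measure.map_apply_of_aemeasurable hZ measurableSet_Ici]
    congr 1
    ext ω
    simp only [mem_preimage, mem_Iic, mem_Ici, neg_le]
  have F_anti : Antitone F := fun v w hvw =>
    ENNReal.toReal_mono (measure_ne_top _ _) (measure_mono fun ω h => hvw.trans h)
  have F_mble : Measurable F := F_anti.measurable
  have F_nn : ∀ v, 0 ≤ F v := fun v => ENNReal.toReal_nonneg
  have F_le1 : ∀ v, F v ≤ 1 := by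
    intro v
    have := ENNReal.toReal_mono (ENNReal.one_ne_top) (prob_le_one (μ := ℙ) (s := {ω | v ≤ Y ω}))
    simpa using this
  have key : ∀ x ∈ Ioo a b,
      (ℙ {ω | Z ω + x ∈ Ioo a b}).toReal = 1 - F ((x - a)/s) - F ((b - x)/s) := by
    intro x hx
    have hpre : {ω | Z ω + x ∈ Ioo a b} = Z ⁻¹' Ioo (a - x) (b - x) := by
      ext ω
      simp only [mem_setOf_eq, mem_Ioo, mem_preimage]
      constructor <;> intro ⟨h1, h2⟩ <;> constructor <;> linarith
    have hcd : a - x < b - x := by linarith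
    have hIoo : Ioo (a - x) (b - x) = (Iic (a - x) ∪ Ici (b - x))ᶜ := by
      rw [compl_union, compl_Iic, compl_Ici, Ioi_inter_Iio]
    have hdisj : Disjoint (Iic (a - x)) (Ici (b - x)) :=
      disjoint_left.mpr fun y hy hy' => absurd (le_trans hy' hy) (not_le.mpr hcd)
    have hμ : (Measure.map Z ℙ) {ω | False} = 0 := by simp
    have hPM : IsProbabilityMeasure (Measure.map Z ℙ) := Measure.isProbabilityMeasure_map hZ
    have hval : ℙ {ω | Z ω + x ∈ Ioo a b} = (Measure.map Z ℙ) (Ioo (a - x) (b - x)) := by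
      rw [Measure.map_apply_of_aemeasurable hZ measurableSet_Ioo, hpre]
    have hcompl : (Measure.map Z ℙ) (Ioo (a - x) (b - x))
        = 1 - (Measure.map Z ℙ) (Iic (a - x) ∪ Ici (b - x)) := by
      rw [hIoo, prob_compl_eq_one_sub (measurableSet_Iic.union measurableSet_Ici)]
    have hunion : (Measure.map Z ℙ) (Iic (a - x) ∪ Ici (b - x))
        = (Measure.map Z ℙ) (Iic (a - x)) + (Measure.map Z ℙ) (Ici (b - x)) :=
      measure_union hdisj measurableSet_Ici
    have h1 : (Measure.map Z ℙ) (Iic (a - x)) = ℙ {ω | (x - a)/s ≤ Y ω} := by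
      rw [hIic, neg_sub, hIci]
    have h2 : (Measure.map Z ℙ) (Ici (b - x)) = ℙ {ω | (b - x)/s ≤ Y ω} := hIci _
    rw [hval, hcompl, hunion, h1, h2]
    have hle : ℙ {ω | (x - a)/s ≤ Y ω} + ℙ {ω | (b - x)/s ≤ Y ω} ≤ 1 := by
      rw [← h1, ← h2, ← hunion]
      exact prob_le_one
    rw [ENNReal.toReal_sub_of_le hle ENNReal.one_ne_top, ENNReal.toReal_add (measure_ne_top _ _)
      (measure_ne_top _ _)]
    simp only [ENNReal.toReal_one, hF_def]
    ring
  -- integrability of the shifted F's on Ioo a b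
  have hvol : volume (Ioo a b) < ⊤ := by simp [Real.volume_Ioo]
  have hint_aux : ∀ g : ℝ → ℝ, Measurable g →
      IntegrableOn (fun x => F (g x)) (Ioo a b) := by
    intro g hg
    refine Integrable.mono' ((integrableOn_const_iff (C := (1:ℝ))).mpr (Or.inr hvol))
      ((F_mble.comp hg).aestronglyMeasurable.restrict) ?_
    refine Eventually.of_forall fun x => ?_
    rw [Real.norm_eq_abs, abs_of_nonneg (F_nn _)]
    exact F_le1 _
  have hint1 : IntegrableOn (fun x => F ((x - a)/s)) (Ioo a b) :=
    hint_aux _ ((measurable_id.sub_const a).div_const s)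
  have hint2 : IntegrableOn (fun x => F ((b - x)/s)) (Ioo a b) :=
    hint_aux _ ((measurable_const.sub measurable_id).div_const s)
  have hsplit : ∫ x in Ioo a b, (ℙ {ω | Z ω + x ∈ Ioo a b}).toReal
      = ∫ x in Ioo a b, (1 - F ((x - a)/s) - F ((b - x)/s)) := by
    exact setIntegral_congr_fun measurableSet_Ioo key
  have hone : ∫ x in Ioo a b, (1:ℝ) = b - a := by
    simp [Real.volume_Ioo, ENNReal.toReal_ofReal (by linarith : (0:ℝ) ≤ b - a), hab.le]
  have hI1 : ∫ x in Ioo a b, F ((x - a)/s) = s * ∫ v in (0:ℝ)..((b - a)/s), F v := by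
    rw [← integral_Ioc_eq_integral_Ioo, ← intervalIntegral.integral_of_le hab.le]
    have := intervalIntegral.integral_comp_sub_right (a := a) (b := b)
      (fun y => F (y / s)) a
    rw [this, sub_self]
    rw [intervalIntegral.integral_comp_div (a := 0) (b := b - a) (c := s) F hs.ne']
    simp [smul_eq_mul, zero_div]
  have hI2 : ∫ x in Ioo a b, F ((b - x)/s) = s * ∫ v in (0:ℝ)..((b - a)/s), F v := by
    rw [← integral_Ioc_eq_integral_Ioo, ← intervalIntegral.integral_of_le hab.le]
    have := intervalIntegral.integral_comp_sub_left (a := a) (b := b)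
      (fun y => F (y / s)) b
    rw [this, sub_self]
    rw [intervalIntegral.integral_comp_div (a := 0) (b := b - a) (c := s) F hs.ne']
    simp [smul_eq_mul, zero_div]
  have hHval : ∫ x in Ioo a b, (ℙ {ω | Z ω + x ∈ Ioo a b}).toReal
      = (b - a) - 2 * (s * ∫ v in (0:ℝ)..((b - a)/s), F v) := by
    rw [hsplit]
    rw [integral_sub (f := fun x => 1 - F ((x - a)/s)) (g := fun x => F ((b - x)/s))
      ((((integrableOn_const_iff).mpr (Or.inr hvol))).sub hint1) hint2,
      integral_sub (f := fun _ => (1:ℝ)) (g := fun x => F ((x - a)/s))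
      ((integrableOn_const_iff).mpr (Or.inr hvol)) hint1, hone, hI1, hI2]
    ring
  rw [hHval]
  ring

/-- For a family of symmetric random variables `(X_t)` with
`X_t =ᵈ t^H X_1`, `X_1` integrable, and `E[X_1 1_{X_1 ≥ 0}] > 0`, the regular heat
content of `D = (a,b)` satisfies
`lim_{t↓0} ((b-a) - H_D(t)) / t^H = 2 E[X_1 1_{X_1 ≥ 0}]`. -/
theorem regular_heat_content_selfsimilar_limit
    {Ω : Type*} [MeasureSpace Ω] [IsProbabilityMeasure (ℙ : Measure Ω)]
    (a b : ℝ) (hab : a < b) (Hidx : ℝ) (hHidx : 0 < Hidx) (X : ℝ → Ω → ℝ)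
    (hint : Integrable (X 1) ℙ)
    (hmpos : 0 < ∫ ω in {ω | 0 ≤ X 1 ω}, X 1 ω ∂ℙ)
    (hsym : ∀ t ∈ Set.Ioc (0:ℝ) 1,
      Measure.map (fun ω => -X t ω) ℙ = Measure.map (X t) ℙ)
    (hss : ∀ t ∈ Set.Ioc (0:ℝ) 1,
      Measure.map (X t) ℙ = Measure.map (fun ω => t ^ Hidx * X 1 ω) ℙ)
    (H : ℝ → ℝ)
    (hH : ∀ t, H t = ∫ x in Set.Ioo a b, (ℙ {ω | X t ω + x ∈ Set.Ioo a b}).toReal) :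
    Tendsto (fun t => ((b - a) - H t) / t ^ Hidx) (nhdsWithin 0 (Set.Ioc 0 1))
      (nhds (2 * ∫ ω in {ω | 0 ≤ X 1 ω}, X 1 ω ∂ℙ)) := by
  obtain ⟨hIO, hval⟩ := aux_layercake (X 1) hint
  have hrpow : Tendsto (fun t : ℝ => t ^ Hidx) (nhdsWithin 0 (Set.Ioc 0 1))
      (nhdsWithin 0 (Set.Ioi 0)) := by
    rw [tendsto_nhdsWithin_iff]
    constructor
    · have hc : ContinuousAt (fun t : ℝ => t ^ Hidx) 0 :=
        Real.continuousAt_rpow_const 0 Hidx (Or.inr hHidx.le)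
      have := hc.tendsto.mono_left (nhdsWithin_le_nhds (s := Set.Ioc 0 1))
      simpa [Real.zero_rpow hHidx.ne'] using this
    · filter_upwards [self_mem_nhdsWithin] with t ht
      exact Real.rpow_pos_of_pos ht.1 Hidx
  have hdiv : Tendsto (fun t : ℝ => (b - a) / t ^ Hidx) (nhdsWithin 0 (Set.Ioc 0 1))
      atTop := by
    simp only [div_eq_mul_inv]
    exact Tendsto.const_mul_atTop (by linarith) hrpow.inv_tendsto_nhdsGT_zero
  have hconv := intervalIntegral_tendsto_integral_Ioi 0 hIO hdiv
  have hfinal := hconv.const_mul (2:ℝ)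
  rw [hval] at hfinal
  refine hfinal.congr' ?_
  filter_upwards [self_mem_nhdsWithin] with t ht
  have hs : 0 < t ^ Hidx := Real.rpow_pos_of_pos ht.1 Hidx
  have hkey := aux_heat a b hab (X 1) (X t) (t ^ Hidx) hs hint (hsym t ht) (hss t ht)
  rw [hH t, hkey]
  field_simp
end

section
/- Let (X_t)_{t∈[0,1]} be a zero-mean Gaussian process with càdlàg paths, X_0 = 0, X_t non-degenerate for every t ∈ (0,1], μ_t < ∞ for every t ∈ (0,1], and R_t → 0 as t ↓ 0. Then σ_t²/μ_t → 0 as t ↓ 0. -/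
open MeasureTheory ProbabilityTheory Filter Set

/-- A real-valued function on `[0,1]` is càdlàg: right-continuous on `[0,1)` and
with left limits on `(0,1]`. -/
def IsCadlagPath (f : ℝ → ℝ) : Prop :=
  (∀ t ∈ Set.Ico (0:ℝ) 1, ContinuousWithinAt f (Set.Ici t) t) ∧
  (∀ t ∈ Set.Ioc (0:ℝ) 1, ∃ l, Filter.Tendsto f (nhdsWithin t (Set.Iio t)) (nhds l))

/-- `(X_t)_{t∈[0,1]}` is a zero-mean Gaussian process: every finite linear combination
`∑ᵢ cᵢ X_{tᵢ}` has a centered Gaussian distribution. -/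
def IsZeroMeanGaussianProcess {Ω : Type*} [MeasureSpace Ω] (X : ℝ → Ω → ℝ) : Prop :=
  ∀ (n : ℕ) (ts : Fin n → ℝ), (∀ i, ts i ∈ Set.Icc (0:ℝ) 1) → ∀ (c : Fin n → ℝ),
    ∃ v : NNReal, Measure.map (fun ω => ∑ i, c i * X (ts i) ω) ℙ =
      ProbabilityTheory.gaussianReal 0 v

open Real Topology
open scoped ENNReal NNReal
lemma aux_int_mul {b : ℝ} (hb : 0 < b) :
    ∫ x in Ioi (0:ℝ), x * Real.exp (-b * x ^ 2) = (2 * b)⁻¹ := by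
  have h := integral_rpow_mul_exp_neg_mul_rpow (by norm_num : (0:ℝ) < 2)
    (by norm_num : (-1:ℝ) < 1) hb
  have heq : ∀ x ∈ Ioi (0:ℝ), x ^ (1:ℝ) * Real.exp (-b * x ^ (2:ℝ))
      = x * Real.exp (-b * x ^ 2) := by
    intro x hx
    rw [Real.rpow_one, show ((2:ℝ)) = ((2:ℕ):ℝ) by norm_num, Real.rpow_natCast]
  rw [setIntegral_congr_fun measurableSet_Ioi heq] at h
  rw [h, show (-((1:ℝ)+1))/2 = -1 by norm_num, Real.rpow_neg_one,
    show ((1:ℝ)+1)/2 = 1 by norm_num, Real.Gamma_one, mul_inv, mul_one]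
  ring

lemma aux_int_sq {b : ℝ} (hb : 0 < b) :
    ∫ x in Ioi (0:ℝ), x ^ 2 * Real.exp (-b * x ^ 2) = b ^ (-(3:ℝ)/2) * (Real.sqrt π / 4) := by
  have h := integral_rpow_mul_exp_neg_mul_rpow (by norm_num : (0:ℝ) < 2)
    (by norm_num : (-1:ℝ) < 2) hb
  have heq : ∀ x ∈ Ioi (0:ℝ), x ^ (2:ℝ) * Real.exp (-b * x ^ (2:ℝ))
      = x ^ 2 * Real.exp (-b * x ^ 2) := by
    intro x hx
    rw [show ((2:ℝ)) = ((2:ℕ):ℝ) by norm_num, Real.rpow_natCast]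
  rw [setIntegral_congr_fun measurableSet_Ioi heq] at h
  rw [h]
  have h32 : ((2:ℝ) + 1) / 2 = 1/2 + 1 := by norm_num
  rw [h32, Real.Gamma_add_one (by norm_num), Real.Gamma_one_half_eq]
  ring

lemma gaussianReal_eq_withDensity' {v : ℝ≥0} (hv : v ≠ 0) :
    gaussianReal 0 v = volume.withDensity
      (fun x => ((gaussianPDFReal 0 v x).toNNReal : ℝ≥0∞)) := by
  rw [gaussianReal_of_var_ne_zero 0 hv]
  rfl

lemma integral_gaussianReal_eq {v : ℝ≥0} (hv : v ≠ 0) (g : ℝ → ℝ) :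
    ∫ x, g x ∂(gaussianReal 0 v) = ∫ x, gaussianPDFReal 0 v x * g x := by
  rw [gaussianReal_eq_withDensity' hv,
    integral_withDensity_eq_integral_smul ((measurable_gaussianPDFReal 0 v).real_toNNReal) g]
  congr 1
  ext x
  rw [NNReal.smul_def, Real.coe_toNNReal _ (gaussianPDFReal_nonneg 0 v x), smul_eq_mul]

lemma integrable_gaussianReal_of_bound {v : ℝ≥0} (hv : v ≠ 0) (g : ℝ → ℝ)
    (hg : Measurable g) (hbd : ∀ x, |g x| ≤ |x| + 1) :
    Integrable g (gaussianReal 0 v) := by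
  rw [gaussianReal_eq_withDensity' hv,
    integrable_withDensity_iff_integrable_smul ((measurable_gaussianPDFReal 0 v).real_toNNReal)]
  have hb : (0:ℝ) < (2 * (v:ℝ))⁻¹ := by
    positivity
  have hint : Integrable (fun x : ℝ =>
      (Real.sqrt (2 * π * v))⁻¹ * ((|x| + 1) * Real.exp (-(2*(v:ℝ))⁻¹ * x ^ 2))) := by
    apply Integrable.const_mul
    have h1 : Integrable (fun x : ℝ => |x| * Real.exp (-(2*(v:ℝ))⁻¹ * x ^ 2)) := by
      have := (integrable_mul_exp_neg_mul_sq hb).abs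
      apply this.congr
      filter_upwards with x
      rw [abs_mul, abs_of_nonneg (Real.exp_pos _).le]
    have h2 : Integrable (fun x : ℝ => Real.exp (-(2*(v:ℝ))⁻¹ * x ^ 2)) :=
      integrable_exp_neg_mul_sq hb
    simpa [add_mul, one_mul, Pi.add_def] using h1.add h2
  apply hint.mono'
  · exact (((measurable_gaussianPDFReal 0 v).real_toNNReal.coe_nnreal_real).smul hg).aestronglyMeasurable
  · filter_upwards with x
    rw [NNReal.smul_def, Real.coe_toNNReal _ (gaussianPDFReal_nonneg 0 v x), smul_eq_mul]
    rw [Real.norm_eq_abs, abs_mul, abs_of_nonneg (gaussianPDFReal_nonneg 0 v x)]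
    rw [gaussianPDFReal]
    have : |g x| ≤ |x| + 1 := hbd x
    have hpdf : (0:ℝ) ≤ (Real.sqrt (2 * π * v))⁻¹ := by positivity
    have hexp : Real.exp (-(x - 0)^2 / (2 * v)) = Real.exp (-(2*(v:ℝ))⁻¹ * x ^ 2) := by
      congr 1
      have hv2 : (2:ℝ) * v ≠ 0 := by positivity
      field_simp
      simp
    rw [hexp, mul_assoc]
    have h0 : (0:ℝ) ≤ Real.exp (-(2*(v:ℝ))⁻¹ * x ^ 2) := (Real.exp_pos _).le
    refine mul_le_mul_of_nonneg_left ?_ hpdf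
    rw [mul_comm]
    exact mul_le_mul_of_nonneg_right this h0

lemma pdf_eq {v : ℝ≥0} (x : ℝ) :
    gaussianPDFReal 0 v x
      = (Real.sqrt (2 * π * v))⁻¹ * Real.exp (-(2*(v:ℝ))⁻¹ * x ^ 2) := by
  rw [gaussianPDFReal]
  rcases eq_or_ne v 0 with rfl | hv
  · simp
  · congr 1
    congr 1
    have hv2 : (2:ℝ) * v ≠ 0 := by positivity
    field_simp
    simp

lemma integral_max_gaussianReal (v : ℝ≥0) :
    ∫ x, max 0 x ∂(gaussianReal 0 v) = Real.sqrt v / Real.sqrt (2*π) := by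
  rcases eq_or_ne v 0 with rfl | hv
  · simp [gaussianReal_zero_var, integral_dirac]
  have hb : (0:ℝ) < (2*(v:ℝ))⁻¹ := by positivity
  rw [integral_gaussianReal_eq hv]
  have hind : ∀ x, gaussianPDFReal 0 v x * max 0 x
      = Set.indicator (Ioi (0:ℝ))
        (fun x => (Real.sqrt (2*π*v))⁻¹ * (x * Real.exp (-(2*(v:ℝ))⁻¹ * x^2))) x := by
    intro x
    rcases le_or_gt x 0 with hx | hx
    · rw [Set.indicator_of_notMem (by simpa using hx), max_eq_left hx, mul_zero]
    · rw [Set.indicator_of_mem (Set.mem_Ioi.mpr hx), max_eq_right hx.le, pdf_eq]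
      ring
  rw [show (fun x => gaussianPDFReal 0 v x * max 0 x)
      = Set.indicator (Ioi (0:ℝ))
        (fun x => (Real.sqrt (2*π*v))⁻¹ * (x * Real.exp (-(2*(v:ℝ))⁻¹ * x^2)))
      from funext hind]
  rw [integral_indicator measurableSet_Ioi, integral_const_mul, aux_int_mul hb]
  have h1 : (2 * ((2*(v:ℝ))⁻¹))⁻¹ = (v:ℝ) := by
    have : (v:ℝ) ≠ 0 := by exact_mod_cast hv
    field_simp
  rw [h1]
  have h2 : Real.sqrt (2*π*(v:ℝ)) = Real.sqrt (2*π) * Real.sqrt v := by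
    rw [← Real.sqrt_mul (by positivity)]
  have hsv : (0:ℝ) < Real.sqrt v := Real.sqrt_pos.mpr (by positivity)
  have hs2 : (0:ℝ) < Real.sqrt (2*π) := Real.sqrt_pos.mpr (by positivity)
  have hvv : Real.sqrt v * Real.sqrt v = (v:ℝ) := Real.mul_self_sqrt v.coe_nonneg
  rw [h2]
  rw [eq_div_iff hs2.ne']
  field_simp
  linear_combination (-1) * hvv

lemma integrable_sq_exp {b : ℝ} (hb : 0 < b) :
    Integrable (fun x : ℝ => x ^ 2 * Real.exp (-b * x ^ 2)) := by
  have h2 : Integrable (fun x : ℝ => (2/b) * Real.exp (-(b/2) * x ^ 2)) :=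
    (integrable_exp_neg_mul_sq (by linarith)).const_mul _
  apply h2.mono'
  · exact ((measurable_id.pow_const 2).mul
      ((measurable_id.pow_const 2).const_mul (-b)).exp).aestronglyMeasurable
  · filter_upwards with x
    have h1 : (b/2) * x^2 ≤ Real.exp ((b/2) * x^2) :=
      le_trans (by linarith [Real.add_one_le_exp ((b/2) * x^2)]) le_rfl
    have h3 : x^2 ≤ (2/b) * Real.exp ((b/2) * x^2) := by
      have h5 := mul_le_mul_of_nonneg_left h1 (le_of_lt (by positivity : (0:ℝ) < 2/b))
      calc x^2 = (2/b) * ((b/2) * x^2) := by field_simp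
        _ ≤ (2/b) * Real.exp ((b/2) * x^2) := h5
    have h4 : x^2 * Real.exp (-b * x^2) ≤ (2/b) * Real.exp ((b/2)*x^2) * Real.exp (-b*x^2) :=
      mul_le_mul_of_nonneg_right h3 (Real.exp_pos _).le
    rw [Real.norm_eq_abs, abs_of_nonneg (by positivity)]
    calc x^2 * Real.exp (-b * x^2) ≤ (2/b) * Real.exp ((b/2)*x^2) * Real.exp (-b*x^2) := h4
      _ = (2/b) * Real.exp (-(b/2) * x^2) := by
          rw [mul_assoc, ← Real.exp_add]; ring_nf

lemma integral_sq_gaussianReal (v : ℝ≥0) :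
    ∫ x, x ^ 2 ∂(gaussianReal 0 v) = (v:ℝ) := by
  rcases eq_or_ne v 0 with rfl | hv
  · simp [gaussianReal_zero_var, integral_dirac]
  have hv' : (0:ℝ) < v := by positivity
  have hb : (0:ℝ) < (2*(v:ℝ))⁻¹ := by positivity
  rw [integral_gaussianReal_eq hv]
  have hpt : (fun x => gaussianPDFReal 0 v x * x ^ 2)
      = fun x => (Real.sqrt (2*π*v))⁻¹ * (x ^ 2 * Real.exp (-(2*(v:ℝ))⁻¹ * x ^ 2)) := by
    funext x
    rw [pdf_eq]
    ring
  rw [hpt, integral_const_mul]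
  have habs : ∫ x : ℝ, x ^ 2 * Real.exp (-(2*(v:ℝ))⁻¹ * x ^ 2)
      = 2 * ∫ x in Ioi (0:ℝ), x ^ 2 * Real.exp (-(2*(v:ℝ))⁻¹ * x ^ 2) := by
    rw [← integral_comp_abs (f := fun x => x ^ 2 * Real.exp (-(2*(v:ℝ))⁻¹ * x ^ 2))]
    congr 1
    funext x
    rw [sq_abs]
  rw [habs, aux_int_sq hb]
  -- now pure algebra with rpow
  have h2v : (0:ℝ) < 2*(v:ℝ) := by positivity
  have h32 : ((2*(v:ℝ))⁻¹) ^ (-(3:ℝ)/2) = (2*(v:ℝ)) * Real.sqrt (2*(v:ℝ)) := by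
    rw [← Real.rpow_neg_one (2*(v:ℝ)), ← Real.rpow_mul h2v.le]
    rw [show (-1:ℝ) * (-(3:ℝ)/2) = 1 + 1/2 by norm_num, Real.rpow_add h2v, Real.rpow_one,
      ← Real.sqrt_eq_rpow]
  rw [h32]
  have h2 : Real.sqrt (2*π*(v:ℝ)) = Real.sqrt (2*(v:ℝ)) * Real.sqrt π := by
    rw [show (2*π*(v:ℝ)) = (2*(v:ℝ))*π by ring, Real.sqrt_mul h2v.le]
  rw [h2]
  have hs : (0:ℝ) < Real.sqrt (2*(v:ℝ)) := Real.sqrt_pos.mpr h2v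
  have hsp : (0:ℝ) < Real.sqrt π := Real.sqrt_pos.mpr pi_pos
  field_simp
  ring

lemma gaussian_facts {Ω : Type*} [MeasureSpace Ω] {Y : Ω → ℝ} {v : ℝ≥0}
    (hmap : Measure.map Y ℙ = gaussianReal 0 v) :
    (∫ ω, (Y ω)^2 ∂ℙ = (v:ℝ)) ∧ (∫ ω, max 0 (Y ω) ∂ℙ = Real.sqrt v / Real.sqrt (2*π)) ∧
      Integrable (fun ω => max 0 (Y ω)) ℙ := by
  have haem : AEMeasurable Y ℙ := by
    by_contra h
    rw [Measure.map_of_not_aemeasurable h] at hmap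
    have := congrArg (fun m : Measure ℝ => m Set.univ) hmap
    simp [measure_univ] at this
  have hmax_cont : Continuous fun x : ℝ => max 0 x := continuous_const.max continuous_id
  have h1 : ∫ ω, (Y ω)^2 ∂ℙ = ∫ x, x^2 ∂(gaussianReal 0 v) := by
    rw [← hmap, integral_map haem (Continuous.aestronglyMeasurable (by continuity))]
  have h2 : ∫ ω, max 0 (Y ω) ∂ℙ = ∫ x, max 0 x ∂(gaussianReal 0 v) := by
    rw [← hmap, integral_map haem hmax_cont.aestronglyMeasurable]
  have h3 : Integrable (fun x : ℝ => max 0 x) (gaussianReal 0 v) := by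
    rcases eq_or_ne v 0 with rfl | hv
    · rw [gaussianReal_zero_var]
      refine ⟨hmax_cont.aestronglyMeasurable, ?_⟩
      simp [HasFiniteIntegral, lintegral_dirac]
    · refine integrable_gaussianReal_of_bound hv _ (measurable_const.max measurable_id) ?_
      intro x
      rw [abs_of_nonneg (le_max_left _ _)]
      exact le_trans (max_le (abs_nonneg x) (le_abs_self x)) (by linarith)
  have h4 : Integrable (fun ω => max 0 (Y ω)) ℙ := by
    have := (integrable_map_measure hmax_cont.aestronglyMeasurable haem).mp (hmap ▸ h3)
    exact this
  exact ⟨h1.trans (integral_sq_gaussianReal v), h2.trans (integral_max_gaussianReal v), h4⟩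

lemma cadlag_bdd {f : ℝ → ℝ} (hf : IsCadlagPath f) {t : ℝ} (ht : t ∈ Set.Ioo (0:ℝ) 1) :
    ∃ M, ∀ s ∈ Set.Icc (0:ℝ) t, f s ≤ M := by
  have key : ∀ u, u ∈ Set.Icc (0:ℝ) t → ∃ M, ∃ V, V ∈ 𝓝 u ∧
      ∀ x ∈ V, x ∈ Set.Icc (0:ℝ) t → f x ≤ M := by
    intro u hu
    have hu1 : u < 1 := lt_of_le_of_lt hu.2 ht.2
    have hright : ∀ᶠ x in nhdsWithin u (Set.Ici u), f x ≤ f u + 1 := by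
      have h := hf.1 u ⟨hu.1, hu1⟩
      exact h.eventually (eventually_le_nhds (lt_add_one (f u)))
    rcases eq_or_lt_of_le hu.1 with h0 | h0
    · -- u = 0
      refine ⟨f u + 1, ?_⟩
      have : ∀ᶠ x in nhdsWithin u (Set.Icc 0 t), f x ≤ f u + 1 := by
        refine Filter.Eventually.filter_mono (nhdsWithin_mono u ?_) hright
        intro x hx; rw [← h0]; exact hx.1
      rw [eventually_nhdsWithin_iff, eventually_nhds_iff] at this
      obtain ⟨V, hV1, hV2, hV3⟩ := this
      exact ⟨V, hV2.mem_nhds hV3, fun x hx hx' => hV1 x hx hx'⟩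
    · -- u > 0
      obtain ⟨l, hl⟩ := hf.2 u ⟨h0, hu1.le⟩
      have hleft : ∀ᶠ x in nhdsWithin u (Set.Iio u), f x ≤ l + 1 :=
        hl.eventually (eventually_le_nhds (lt_add_one l))
      refine ⟨max (f u + 1) (l + 1), ?_⟩
      have hsup : ∀ᶠ x in nhdsWithin u (Set.Iio u) ⊔ nhdsWithin u (Set.Ici u),
          f x ≤ max (f u + 1) (l + 1) := by
        rw [Filter.eventually_sup]
        constructor
        · exact hleft.mono fun x hx => le_trans hx (le_max_right _ _)
        · exact hright.mono fun x hx => le_trans hx (le_max_left _ _)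
      have hle : 𝓝 u ≤ nhdsWithin u (Set.Iio u) ⊔ nhdsWithin u (Set.Ici u) := by
        rw [← nhdsWithin_union, Set.Iio_union_Ici, nhdsWithin_univ]
      have : ∀ᶠ x in 𝓝 u, f x ≤ max (f u + 1) (l + 1) := hle hsup
      rw [eventually_nhds_iff] at this
      obtain ⟨V, hV1, hV2, hV3⟩ := this
      exact ⟨V, hV2.mem_nhds hV3, fun x hx _ => hV1 x hx⟩
  choose! M V hVmem hVbd using key
  obtain ⟨F, hFsub, hFcov⟩ :=
    isCompact_Icc.elim_nhds_subcover V (fun u hu => hVmem u hu)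
  have h0mem : (0:ℝ) ∈ Set.Icc (0:ℝ) t := ⟨le_refl 0, ht.1.le⟩
  have hFne : F.Nonempty := by
    rcases Set.mem_iUnion₂.mp (hFcov h0mem) with ⟨u, hu, -⟩
    exact ⟨u, hu⟩
  refine ⟨F.sup' hFne M, fun s hs => ?_⟩
  rcases Set.mem_iUnion₂.mp (hFcov hs) with ⟨u, huF, hsV⟩
  exact le_trans (hVbd u (hFsub u huF) s hsV hs) (Finset.le_sup' M huF)

/-- For a zero-mean Gaussian process with càdlàg paths, `X₀ = 0`,
non-degenerate marginals, finite `μ_t`, and `R_t → 0` as `t ↓ 0`, one has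
`σ_t²/μ_t → 0` as `t ↓ 0`. -/
theorem sigma_sq_little_o_of_mu
    {Ω : Type*} [MeasureSpace Ω] [IsProbabilityMeasure (ℙ : Measure Ω)]
    (X : ℝ → Ω → ℝ)
    (hGauss : IsZeroMeanGaussianProcess X)
    (hpath : ∀ ω, IsCadlagPath (fun s => X s ω))
    (hX0 : ∀ ω, X 0 ω = 0)
    (hnondeg : ∀ t ∈ Set.Ioc (0:ℝ) 1, 0 < ℙ {ω | X t ω ≠ 0})
    (hμfin : ∀ t ∈ Set.Ioc (0:ℝ) 1,
      Integrable (fun ω => ⨆ s : Set.Icc (0:ℝ) t, X s.1 ω) ℙ)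
    (R μ σsq : ℝ → ℝ)
    (hR : ∀ s, R s = ∫ ω, (X s ω) ^ 2 ∂ℙ)
    (hRlim : Tendsto R (nhdsWithin 0 (Set.Ioc 0 1)) (nhds 0))
    (hμ : ∀ t, μ t = ∫ ω, (⨆ s : Set.Icc (0:ℝ) t, X s.1 ω) ∂ℙ)
    (hσsq : ∀ t, σsq t = ⨆ s : Set.Icc (0:ℝ) t, R s.1) :
    Tendsto (fun t => σsq t / μ t) (nhdsWithin 0 (Set.Ioc 0 1)) (nhds 0) := by
  have hRnn : ∀ s, 0 ≤ R s := fun s => by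
    rw [hR]; exact integral_nonneg fun ω => sq_nonneg _
  have hR0 : R 0 = 0 := by rw [hR]; simp [hX0]
  have hσnn : ∀ t, 0 ≤ σsq t := fun t => by
    rw [hσsq]; exact Real.iSup_nonneg fun s => hRnn _
  have hπ : (0:ℝ) < 2 * Real.pi := by positivity
  -- Key inequality: for `t ∈ (0,1)`, `μ t ≥ 0` and `σsq t ≤ 2π (μ t)²`.
  have hkey : ∀ t ∈ Set.Ioo (0:ℝ) 1, 0 ≤ μ t ∧ σsq t ≤ 2 * Real.pi * (μ t)^2 := by
    intro t ht
    have htIcc : (0:ℝ) ∈ Set.Icc (0:ℝ) t := ⟨le_rfl, ht.1.le⟩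
    have hbdd : ∀ ω, BddAbove (Set.range fun s : Set.Icc (0:ℝ) t => X s.1 ω) := by
      intro ω
      obtain ⟨M, hM⟩ := cadlag_bdd (hpath ω) ht
      exact ⟨M, by rintro y ⟨s, rfl⟩; exact hM s.1 s.2⟩
    have hsup0 : ∀ ω, 0 ≤ ⨆ s : Set.Icc (0:ℝ) t, X s.1 ω := by
      intro ω
      have := le_ciSup (hbdd ω) (⟨0, htIcc⟩ : Set.Icc (0:ℝ) t)
      simpa [hX0 ω] using this
    have hμnn : 0 ≤ μ t := by rw [hμ]; exact integral_nonneg hsup0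
    refine ⟨hμnn, ?_⟩
    rw [hσsq]
    refine Real.iSup_le ?_ (by positivity)
    rintro ⟨s, hs⟩
    show R s ≤ 2*Real.pi*(μ t)^2
    rcases eq_or_lt_of_le hs.1 with h0 | h0
    · rw [← h0, hR0]; positivity
    · have hs1 : s ∈ Set.Ioc (0:ℝ) 1 := ⟨h0, hs.2.trans ht.2.le⟩
      obtain ⟨v, hv⟩ := hGauss 1 ![s] (fun i => by fin_cases i; exact ⟨hs1.1.le, hs1.2⟩) ![1]
      have hmap : Measure.map (X s) ℙ = gaussianReal 0 v := by
        rw [← hv]; congr 1; funext ω; simp [Fin.sum_univ_one]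
      obtain ⟨hsq, hmaxeq, hintmax⟩ := gaussian_facts hmap
      have hRs : R s = (v:ℝ) := by rw [hR]; exact hsq
      have hmono : ∫ ω, max 0 (X s ω) ∂ℙ ≤ μ t := by
        rw [hμ]
        refine integral_mono hintmax (hμfin t ⟨ht.1, ht.2.le⟩) ?_
        intro ω
        exact max_le (hsup0 ω) (le_ciSup (hbdd ω) (⟨s, hs⟩ : Set.Icc (0:ℝ) t))
      rw [hmaxeq] at hmono
      have h1 : (Real.sqrt v / Real.sqrt (2*Real.pi))^2 ≤ (μ t)^2 :=
        pow_le_pow_left₀ (by positivity) hmono 2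
      have h2 : (Real.sqrt v / Real.sqrt (2*Real.pi))^2 = (v:ℝ) / (2*Real.pi) := by
        rw [div_pow, Real.sq_sqrt v.coe_nonneg, Real.sq_sqrt hπ.le]
      rw [h2] at h1
      rw [hRs]
      calc (v:ℝ) = ((v:ℝ) / (2*Real.pi)) * (2*Real.pi) := by field_simp
        _ ≤ (μ t)^2 * (2*Real.pi) := mul_le_mul_of_nonneg_right h1 hπ.le
        _ = 2*Real.pi*(μ t)^2 := by ring
  -- `σsq → 0` along the filter
  have hσto : Tendsto σsq (nhdsWithin 0 (Set.Ioc 0 1)) (nhds 0) := by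
    rw [Metric.tendsto_nhdsWithin_nhds] at hRlim ⊢
    intro ε hε
    obtain ⟨δ, hδ, hδ'⟩ := hRlim (ε/2) (by linarith)
    refine ⟨δ, hδ, ?_⟩
    intro x hx hdist
    rw [Real.dist_eq, sub_zero] at hdist ⊢
    rw [abs_of_nonneg (hσnn x)]
    have hub : σsq x ≤ ε/2 := by
      rw [hσsq]
      refine Real.iSup_le ?_ (by linarith)
      rintro ⟨s, hs⟩
      show R s ≤ ε/2
      rcases eq_or_lt_of_le hs.1 with h0 | h0
      · rw [← h0, hR0]; linarith
      · have hsm : s ∈ Set.Ioc (0:ℝ) 1 := ⟨h0, hs.2.trans hx.2⟩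
        have hds : dist s 0 < δ := by
          rw [Real.dist_eq, sub_zero, abs_of_pos h0]
          rw [abs_of_pos hx.1] at hdist
          exact lt_of_le_of_lt hs.2 hdist
        have := hδ' hsm hds
        rw [Real.dist_eq, sub_zero] at this
        exact le_of_lt (lt_of_le_of_lt (le_abs_self _) this)
    linarith
  have hsqto : Tendsto (fun t => Real.sqrt (2*Real.pi*σsq t))
      (nhdsWithin 0 (Set.Ioc 0 1)) (nhds 0) := by
    have h1 : Tendsto (fun t => 2*Real.pi*σsq t) (nhdsWithin 0 (Set.Ioc 0 1))
        (nhds (2*Real.pi*0)) := hσto.const_mul _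
    have h2 := (Real.continuous_sqrt.tendsto (2*Real.pi*0)).comp h1
    simpa [Function.comp_def] using h2
  have hev : ∀ᶠ t in nhdsWithin (0:ℝ) (Set.Ioc 0 1), t ∈ Set.Ioo (0:ℝ) 1 := by
    have h1 : ∀ᶠ t in nhdsWithin (0:ℝ) (Set.Ioc 0 1), t ∈ Set.Ioc (0:ℝ) 1 :=
      eventually_mem_nhdsWithin
    have h2 : ∀ᶠ t in nhdsWithin (0:ℝ) (Set.Ioc 0 1), t < 1 :=
      Filter.Eventually.filter_mono nhdsWithin_le_nhds (eventually_lt_nhds one_pos)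
    filter_upwards [h1, h2] with t ht1 ht2
    exact ⟨ht1.1, ht2⟩
  refine tendsto_of_tendsto_of_tendsto_of_le_of_le' tendsto_const_nhds hsqto ?_ ?_
  · filter_upwards [hev] with t ht
    exact div_nonneg (hσnn t) (hkey t ht).1
  · filter_upwards [hev] with t ht
    obtain ⟨hμnn, hineq⟩ := hkey t ht
    rcases eq_or_lt_of_le hμnn with h0 | h0
    · rw [← h0, div_zero]; positivity
    · rw [Real.le_sqrt (div_nonneg (hσnn t) hμnn) (mul_nonneg hπ.le (hσnn t))]
      rw [div_pow, div_le_iff₀ (by positivity : (0:ℝ) < (μ t)^2)]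
      nlinarith [mul_le_mul_of_nonneg_left hineq (hσnn t)]
end

section
/- Let H ∈ (1/2, 1) and α > 0, and for t > 0 define R(t) := H(2H−1)·e^{−2αt}·∫_0^t ∫_0^t e^{α(u+v)}·|u−v|^{2H−2} du dv (the variance function of the fractional Ornstein–Uhlenbeck process). Then lim_{t↓0} R(t)/t^{2H} = 1. -/
open MeasureTheory Filter Set

lemma II_abs {r : ℝ} (hr : -1 < r) (v a b : ℝ) :
    IntervalIntegrable (fun u => |u - v| ^ r) volume a b := by
  have key : ∀ c, IntervalIntegrable (fun u => |u - v| ^ r) volume v c := by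
    intro c
    rcases le_total v c with h | h
    · have h2 := (intervalIntegral.intervalIntegrable_rpow' hr
        (a := 0) (b := c - v)).comp_sub_right v
      simp only [zero_add, sub_add_cancel] at h2
      rw [intervalIntegrable_iff] at h2 ⊢
      refine h2.congr_fun (fun u hu => ?_) measurableSet_uIoc
      rw [Set.uIoc_of_le h] at hu
      rw [abs_of_nonneg (by linarith [hu.1])]
    · have h2 := (intervalIntegral.intervalIntegrable_rpow' hr
        (a := 0) (b := v - c)).comp_sub_left v
      simp only [sub_zero, sub_sub_cancel] at h2
      rw [intervalIntegrable_iff] at h2 ⊢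
      refine h2.congr_fun (fun u hu => ?_) measurableSet_uIoc
      rw [Set.uIoc_of_ge h] at hu
      rw [abs_of_nonpos (by linarith [hu.2]), neg_sub]
  exact (key a).symm.trans (key b)

lemma II_abs' {r : ℝ} (hr : -1 < r) (v a b : ℝ) :
    IntervalIntegrable (fun u => |v - u| ^ r) volume a b :=
  (II_abs hr v a b).congr (fun x _ => by show |x - v| ^ r = |v - x| ^ r; rw [abs_sub_comm])

lemma integral_abs_rpow {r : ℝ} (hr : -1 < r) {t u : ℝ} (h0 : 0 ≤ u) (h1 : u ≤ t) :
    ∫ v in (0:ℝ)..t, |u - v| ^ r = (u ^ (r+1) + (t - u) ^ (r+1)) / (r+1) := by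
  have hr1 : (0:ℝ) < r + 1 := by linarith
  rw [← intervalIntegral.integral_add_adjacent_intervals (a := (0:ℝ)) (b := u) (c := t)
      (II_abs' hr u 0 u) (II_abs' hr u u t)]
  have e1 : ∫ v in (0:ℝ)..u, |u - v| ^ r = u ^ (r+1) / (r+1) := by
    have h : ∫ v in (0:ℝ)..u, |u - v| ^ r = ∫ v in (0:ℝ)..u, (u - v) ^ r := by
      apply intervalIntegral.integral_congr
      intro v hv
      rw [Set.uIcc_of_le h0] at hv
      simp only
      rw [abs_of_nonneg (by linarith [hv.2])]
    rw [h, intervalIntegral.integral_comp_sub_left (fun x => x ^ r) u]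
    simp only [sub_self, sub_zero]
    rw [integral_rpow (Or.inl hr), Real.zero_rpow hr1.ne', sub_zero]
  have e2 : ∫ v in u..t, |u - v| ^ r = (t - u) ^ (r+1) / (r+1) := by
    have h : ∫ v in u..t, |u - v| ^ r = ∫ v in u..t, (v - u) ^ r := by
      apply intervalIntegral.integral_congr
      intro v hv
      rw [Set.uIcc_of_le h1] at hv
      simp only
      rw [abs_of_nonpos (by linarith [hv.1]), neg_sub]
    rw [h, intervalIntegral.integral_comp_sub_right (fun x => x ^ r) u]
    simp only [sub_self]
    rw [integral_rpow (Or.inl hr), Real.zero_rpow hr1.ne', sub_zero]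
  rw [e1, e2]
  ring

lemma setIntegral_abs_rpow {r : ℝ} (hr : -1 < r) {t u : ℝ} (h0 : 0 ≤ u) (h1 : u ≤ t) :
    ∫ v in Icc (0:ℝ) t, |u - v| ^ r = (u ^ (r+1) + (t - u) ^ (r+1)) / (r+1) := by
  rw [← integral_abs_rpow hr h0 h1, intervalIntegral.integral_of_le (h0.trans h1),
    MeasureTheory.integral_Icc_eq_integral_Ioc]

lemma J_integrableOn {r : ℝ} (hr : -1 < r) {t : ℝ} (ht : 0 ≤ t) :
    IntegrableOn (fun u : ℝ => (u ^ (r+1) + (t - u) ^ (r+1)) / (r+1)) (Icc 0 t) := by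
  have h1 : IntervalIntegrable (fun u : ℝ => u ^ (r+1)) volume 0 t :=
    intervalIntegral.intervalIntegrable_rpow' (by linarith)
  have h2 : IntervalIntegrable (fun u : ℝ => (t - u) ^ (r+1)) volume 0 t := by
    have := (intervalIntegral.intervalIntegrable_rpow' (show (-1:ℝ) < r + 1 by linarith)
      (a := 0) (b := t)).comp_sub_left t
    simp only [sub_zero, sub_self] at this
    exact this.symm
  have h3 := (h1.add h2).div_const (r+1)
  rw [intervalIntegrable_iff, uIoc_of_le ht] at h3
  exact (integrableOn_Icc_iff_integrableOn_Ioc).mpr h3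

lemma integrableOn_F {r : ℝ} (hr : -1 < r) {t : ℝ} (ht : 0 ≤ t) :
    IntegrableOn (fun p : ℝ × ℝ => |p.1 - p.2| ^ r) (Icc (0:ℝ) t ×ˢ Icc (0:ℝ) t) := by
  have hmeas : Measurable fun p : ℝ × ℝ => |p.1 - p.2| ^ r := by fun_prop
  have key : Integrable (fun p : ℝ × ℝ => |p.1 - p.2| ^ r)
      ((volume.restrict (Icc (0:ℝ) t)).prod (volume.restrict (Icc (0:ℝ) t))) := by
    rw [MeasureTheory.integrable_prod_iff hmeas.aestronglyMeasurable]
    constructor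
    · refine Filter.Eventually.of_forall fun u => ?_
      have h := II_abs hr u 0 t
      have h' : IntervalIntegrable (fun v => |u - v| ^ r) volume 0 t := by
        refine h.congr (fun x _ => ?_)
        show |x - u| ^ r = |u - x| ^ r; rw [abs_sub_comm]
      rw [intervalIntegrable_iff, uIoc_of_le ht] at h'
      exact (integrableOn_Icc_iff_integrableOn_Ioc).mpr h'
    · apply (J_integrableOn hr ht).congr
      rw [Filter.EventuallyEq, ae_restrict_iff' measurableSet_Icc]
      refine Filter.Eventually.of_forall fun u hu => ?_
      have : ∀ v : ℝ, ‖|u - v| ^ r‖ = |u - v| ^ r := fun v => by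
        rw [Real.norm_eq_abs, abs_of_nonneg (Real.rpow_nonneg (abs_nonneg _) r)]
      simp only [this]
      exact (setIntegral_abs_rpow hr hu.1 hu.2).symm
  rw [Measure.prod_restrict] at key
  rw [Measure.volume_eq_prod ℝ ℝ]
  exact key

lemma I_val {r : ℝ} (hr : -1 < r) {t : ℝ} (ht : 0 ≤ t) :
    ∫ p in Icc (0:ℝ) t ×ˢ Icc (0:ℝ) t, |p.1 - p.2| ^ r
      = 2 * t ^ (r+2) / ((r+1)*(r+2)) := by
  have hr1 : (0:ℝ) < r + 1 := by linarith
  have hr2 : (0:ℝ) < r + 2 := by linarith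
  have hint := integrableOn_F hr ht
  rw [Measure.volume_eq_prod ℝ ℝ] at hint ⊢
  rw [MeasureTheory.setIntegral_prod _ hint]
  rw [MeasureTheory.setIntegral_congr_fun measurableSet_Icc
    (g := fun u => (u ^ (r+1) + (t - u) ^ (r+1)) / (r+1))
    (fun u hu => setIntegral_abs_rpow hr hu.1 hu.2)]
  rw [MeasureTheory.integral_Icc_eq_integral_Ioc, ← intervalIntegral.integral_of_le ht]
  have h1 : IntervalIntegrable (fun u : ℝ => u ^ (r+1)) volume 0 t :=
    intervalIntegral.intervalIntegrable_rpow' (by linarith)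
  have h2 : IntervalIntegrable (fun u : ℝ => (t - u) ^ (r+1)) volume 0 t := by
    have := (intervalIntegral.intervalIntegrable_rpow' (show (-1:ℝ) < r + 1 by linarith)
      (a := 0) (b := t)).comp_sub_left t
    simp only [sub_zero, sub_self] at this
    exact this.symm
  rw [intervalIntegral.integral_div, intervalIntegral.integral_add h1 h2]
  have e1 : ∫ u in (0:ℝ)..t, u ^ (r+1) = t ^ (r+2) / (r+2) := by
    rw [integral_rpow (Or.inl (by linarith)), Real.zero_rpow (by linarith), sub_zero]
    norm_num [show r + 1 + 1 = r + 2 by ring]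
  have e2 : ∫ u in (0:ℝ)..t, (t - u) ^ (r+1) = t ^ (r+2) / (r+2) := by
    rw [intervalIntegral.integral_comp_sub_left (fun x => x ^ (r+1)) t]
    simp only [sub_self, sub_zero]
    rw [integral_rpow (Or.inl (by linarith)), Real.zero_rpow (by linarith), sub_zero]
    norm_num [show r + 1 + 1 = r + 2 by ring]
  rw [e1, e2]
  field_simp
  ring

/-- Small-time behavior of the variance function of the fractional
Ornstein–Uhlenbeck process: for `H ∈ (1/2, 1)` and `α > 0`, with
`R(t) = H(2H-1) e^{-2αt} ∫_{[0,t]²} e^{α(u+v)} |u-v|^{2H-2} du dv`,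
one has `lim_{t↓0} R(t)/t^{2H} = 1`. -/
theorem fractional_OU_variance_asymptotics
    (H α : ℝ) (hH : H ∈ Set.Ioo (1/2 : ℝ) 1) (hα : 0 < α)
    (R : ℝ → ℝ)
    (hR : ∀ t, 0 < t → R t = H * (2 * H - 1) * Real.exp (-2 * α * t) *
      ∫ p in (Set.Icc (0:ℝ) t) ×ˢ (Set.Icc (0:ℝ) t),
        Real.exp (α * (p.1 + p.2)) * |p.1 - p.2| ^ (2 * H - 2)) :
    Tendsto (fun t => R t / t ^ (2 * H)) (nhdsWithin 0 (Set.Ioi 0)) (nhds 1) := by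
  obtain ⟨hH1, hH2⟩ := hH
  have hr : (-1:ℝ) < 2 * H - 2 := by linarith
  have hC : (0:ℝ) < H * (2 * H - 1) := by nlinarith
  have key : ∀ t : ℝ, 0 < t →
      Real.exp (-2 * α * t) ≤ R t / t ^ (2 * H) ∧ R t / t ^ (2 * H) ≤ 1 := by
    intro t ht
    have htnn := ht.le
    set S := (Set.Icc (0:ℝ) t) ×ˢ (Set.Icc (0:ℝ) t) with hS
    have hSm : MeasurableSet S := measurableSet_Icc.prod measurableSet_Icc
    have hFint := integrableOn_F hr htnn
    have hFnn : ∀ p : ℝ × ℝ, 0 ≤ |p.1 - p.2| ^ (2 * H - 2) := fun p =>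
      Real.rpow_nonneg (abs_nonneg _) _
    have hGmeas : Measurable fun p : ℝ × ℝ =>
        Real.exp (α * (p.1 + p.2)) * |p.1 - p.2| ^ (2 * H - 2) := by fun_prop
    have hGint : IntegrableOn (fun p : ℝ × ℝ =>
        Real.exp (α * (p.1 + p.2)) * |p.1 - p.2| ^ (2 * H - 2)) S := by
      apply Integrable.mono' (hFint.const_mul (Real.exp (2 * α * t)))
        hGmeas.aestronglyMeasurable
      rw [ae_restrict_iff' hSm]
      refine Filter.Eventually.of_forall fun p hp => ?_
      rw [Real.norm_eq_abs, abs_of_nonneg (mul_nonneg (Real.exp_nonneg _) (hFnn p))]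
      apply mul_le_mul_of_nonneg_right _ (hFnn p)
      apply Real.exp_le_exp.2
      have h1 := hp.1.2; have h2 := hp.2.2
      nlinarith [hp.1.1, hp.2.1]
    have hlow : (∫ p in S, |p.1 - p.2| ^ (2*H-2)) ≤
        ∫ p in S, Real.exp (α * (p.1 + p.2)) * |p.1 - p.2| ^ (2*H-2) := by
      apply setIntegral_mono_on hFint hGint hSm
      intro p hp
      nth_rewrite 1 [← one_mul (|p.1 - p.2| ^ (2*H-2))]
      apply mul_le_mul_of_nonneg_right _ (hFnn p)
      exact Real.one_le_exp (by nlinarith [hp.1.1, hp.2.1, hα.le])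
    have hup : (∫ p in S, Real.exp (α * (p.1 + p.2)) * |p.1 - p.2| ^ (2*H-2)) ≤
        Real.exp (2*α*t) * ∫ p in S, |p.1 - p.2| ^ (2*H-2) := by
      rw [← MeasureTheory.integral_const_mul]
      apply setIntegral_mono_on hGint (hFint.const_mul _) hSm
      intro p hp
      apply mul_le_mul_of_nonneg_right _ (hFnn p)
      exact Real.exp_le_exp.2 (by nlinarith [hp.1.2, hp.2.2, hα.le])
    have hIFval : (∫ p in S, |p.1 - p.2| ^ (2*H-2)) = t ^ (2*H) / (H * (2*H-1)) := by
      rw [I_val hr htnn, show (2*H - 2 + 2 : ℝ) = 2*H by ring,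
        show (2*H - 2 + 1 : ℝ) = 2*H - 1 by ring]
      have hH0 : (H:ℝ) ≠ 0 := by positivity
      have h21 : (2*H - 1 : ℝ) ≠ 0 := by nlinarith
      field_simp
    have htp : (0:ℝ) < t ^ (2*H) := Real.rpow_pos_of_pos ht _
    rw [hR t ht]
    set IF := ∫ p in S, |p.1 - p.2| ^ (2*H-2) with hIF
    set IG := ∫ p in S, Real.exp (α*(p.1+p.2)) * |p.1 - p.2| ^ (2*H-2) with hIG
    constructor
    · rw [le_div_iff₀ htp]
      have e : Real.exp (-2*α*t) * t^(2*H) = H*(2*H-1) * Real.exp (-2*α*t) * IF := by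
        rw [hIFval]
        have hH0 : (H:ℝ) ≠ 0 := by positivity
        have h21 : (2*H - 1 : ℝ) ≠ 0 := ne_of_gt (by linarith)
        field_simp
      rw [e]
      exact mul_le_mul_of_nonneg_left hlow (by positivity)
    · rw [div_le_one htp]
      calc H*(2*H-1) * Real.exp (-2*α*t) * IG
          ≤ H*(2*H-1) * Real.exp (-2*α*t) * (Real.exp (2*α*t) * IF) :=
            mul_le_mul_of_nonneg_left hup (by positivity)
        _ = H*(2*H-1) * (Real.exp (-2*α*t) * Real.exp (2*α*t)) * IF := by ring
        _ = H*(2*H-1) * IF := by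
            rw [← Real.exp_add, show -2*α*t + 2*α*t = 0 by ring, Real.exp_zero, mul_one]
        _ = t^(2*H) := by
            rw [hIFval]
            field_simp
            exact div_self (ne_of_gt (by linarith))
  have hexp : Tendsto (fun t : ℝ => Real.exp (-2*α*t)) (nhdsWithin 0 (Set.Ioi 0)) (nhds 1) := by
    have h1 : Continuous fun t : ℝ => Real.exp (-2*α*t) := by continuity
    have h2 := h1.tendsto 0
    simp only [mul_zero, Real.exp_zero] at h2
    exact h2.mono_left nhdsWithin_le_nhds
  refine tendsto_of_tendsto_of_tendsto_of_le_of_le' hexp tendsto_const_nhds ?_ ?_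
  · exact eventually_nhdsWithin_of_forall fun t ht => (key t ht).1
  · exact eventually_nhdsWithin_of_forall fun t ht => (key t ht).2
end
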